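/- arXiv:1209.3957 — 6 statements merged into one kernel-verified Lean document; each statement's English description precedes it below -/
import Mathlib

section
/- Let 0<β<1, let M_β be the Mittag-Leffler process (the inverse of a β-stable subordinator) on a probability space (Ω',F',P'), and let ν be the measure on [0,∞) with ν(dx) = (1−β)x^{−β}dx. Then for every ε>0, (P'×ν)( { (ω',x) : M_β((1−x)_+, ω') > ε and M_β((n+1−x)_+, ω') − M_β((n−x)_+, ω') > ε } ) → 0 as n → ∞. (This is the key fact showing that the increment process of the β-Mittag-Leffler fractional SαS motion is mixing.) -/
open MeasureTheory ProbabilityTheory Filter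
open scoped ENNReal

/-- The (generalized right-continuous) inverse of the path `S ω`, i.e. the
Mittag-Leffler process when `S` is a `β`-stable subordinator. -/
noncomputable def invProc {Ω : Type*} (S : Ω → ℝ → ℝ) (ω : Ω) (t : ℝ) : ℝ :=
  sInf {u : ℝ | 0 ≤ u ∧ t ≤ S ω u}

/-- `S` is a `β`-stable subordinator on the probability space `(Ω, P)`:
it starts at `0`, has nondecreasing right-continuous sample paths, independent
increments, and Laplace transform `E[exp (-θ (S u - S v))] = exp (-(u-v) θ^β)`. -/
structure IsStableSubordinator {Ω : Type*} [MeasurableSpace Ω] (β : ℝ) (P : Measure Ω)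
    (S : Ω → ℝ → ℝ) : Prop where
  zero : ∀ ω, S ω 0 = 0
  mono : ∀ ω, Monotone (S ω)
  rightCont : ∀ ω, ∀ u : ℝ, ContinuousWithinAt (S ω) (Set.Ici u) u
  meas : ∀ u : ℝ, Measurable fun ω => S ω u
  indep : ∀ (n : ℕ) (t : Fin (n + 1) → ℝ), Monotone t → 0 ≤ t 0 →
    iIndepFun
      (fun i : Fin n => fun ω => S ω (t i.succ) - S ω (t i.castSucc)) P
  laplace : ∀ θ : ℝ, 0 ≤ θ → ∀ v u : ℝ, 0 ≤ v → v ≤ u →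
    ∫ ω, Real.exp (-θ * (S ω u - S ω v)) ∂P = Real.exp (-(u - v) * θ ^ β)

/-- The measure `ν(dx) = (1-β) x^{-β} dx` on `[0,∞)`. -/
noncomputable def nuMeasure (β : ℝ) : Measure ℝ :=
  (volume.restrict (Set.Ici (0 : ℝ))).withDensity
    (fun x => ENNReal.ofReal ((1 - β) * x ^ (-β)))

namespace MLaux

variable {Ω : Type*} [MeasurableSpace Ω] (P : Measure Ω) [IsProbabilityMeasure P]
  {β : ℝ} (S : Ω → ℝ → ℝ)

/-! ### Joint measurability of `S` -/

lemma meas_comp_countable {g : ℝ → ℝ} (hg : Measurable g) (hc : (Set.range g).Countable)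
    (hm : ∀ r : ℝ, Measurable fun ω => S ω r) :
    Measurable fun q : Ω × ℝ => S q.1 (g q.2) := by
  intro t ht
  have h : (fun q : Ω × ℝ => S q.1 (g q.2)) ⁻¹' t =
      ⋃ r ∈ Set.range g, ({q : Ω × ℝ | S q.1 r ∈ t} ∩ {q : Ω × ℝ | g q.2 = r}) := by
    ext q
    simp only [Set.mem_preimage, Set.mem_iUnion, Set.mem_inter_iff, Set.mem_setOf_eq]
    constructor
    · intro hq; exact ⟨g q.2, ⟨q.2, rfl⟩, hq, rfl⟩
    · rintro ⟨r, _, h1, h2⟩; rw [← h2] at h1; exact h1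
  rw [h]
  exact MeasurableSet.biUnion hc fun r _ =>
    (((hm r).comp measurable_fst) ht).inter
      ((hg.comp measurable_snd) (measurableSet_singleton r))

lemma measS (hS : IsStableSubordinator β P S) :
    Measurable fun q : Ω × ℝ => S q.1 q.2 := by
  set g : ℕ → ℝ → ℝ := fun n u => ((⌊u * 2 ^ n⌋ + 1 : ℤ) : ℝ) / 2 ^ n with hg
  have hgm : ∀ n, Measurable (g n) := by
    intro n
    have : Measurable fun u : ℝ => (⌊u * 2 ^ n⌋ + 1 : ℤ) := (measurable_id.mul_const _).floor.add_const 1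
    exact ((measurable_from_top.comp this : Measurable fun u : ℝ => ((⌊u * 2 ^ n⌋ + 1 : ℤ) : ℝ))).div_const _
  have hgc : ∀ n, (Set.range (g n)).Countable := by
    intro n
    apply Set.Countable.mono _ (Set.countable_range fun k : ℤ => ((k + 1 : ℤ) : ℝ) / 2 ^ n)
    rintro y ⟨u, rfl⟩
    exact ⟨⌊u * 2 ^ n⌋, rfl⟩
  have hgt : ∀ u n, u < g n u ∧ g n u ≤ u + ((2 : ℝ) ^ n)⁻¹ := by
    intro u n
    have h2 : (0 : ℝ) < 2 ^ n := by positivity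
    constructor
    · rw [lt_div_iff₀ h2]
      exact_mod_cast Int.lt_floor_add_one (u * 2 ^ n)
    · rw [div_le_iff₀ h2]
      have h3 : (⌊u * 2 ^ n⌋ : ℝ) ≤ u * 2 ^ n := Int.floor_le _
      have h4 : ((2 : ℝ) ^ n)⁻¹ * 2 ^ n = 1 := inv_mul_cancel₀ h2.ne'
      push_cast
      nlinarith
  have hlim : Tendsto (fun n (q : Ω × ℝ) => S q.1 (g n q.2)) atTop
      (nhds fun q : Ω × ℝ => S q.1 q.2) := by
    rw [tendsto_pi_nhds]
    intro q
    have h1 : Tendsto (fun n => g n q.2) atTop (nhds q.2) := by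
      have hub : Tendsto (fun n : ℕ => q.2 + ((2 : ℝ) ^ n)⁻¹) atTop (nhds (q.2 + 0)) := by
        exact tendsto_const_nhds.add
          (tendsto_inv_atTop_zero.comp (tendsto_pow_atTop_atTop_of_one_lt one_lt_two))
      rw [add_zero] at hub
      exact tendsto_of_tendsto_of_tendsto_of_le_of_le tendsto_const_nhds hub
        (fun n => (hgt q.2 n).1.le) (fun n => (hgt q.2 n).2)
    have h2 : Tendsto (fun n => g n q.2) atTop (nhdsWithin q.2 (Set.Ici q.2)) :=
      tendsto_nhdsWithin_of_tendsto_nhds_of_eventually_within _ h1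
        (Filter.Eventually.of_forall fun n => (hgt q.2 n).1.le)
    exact (hS.rightCont q.1 q.2).tendsto.comp h2
  exact measurable_of_tendsto_metrizable
    (fun n => meas_comp_countable S (hgm n) (hgc n) hS.meas) hlim

lemma S_nonneg (hS : IsStableSubordinator β P S) (ω : Ω) {u : ℝ} (hu : 0 ≤ u) :
    0 ≤ S ω u := by
  rw [← hS.zero ω]; exact hS.mono ω hu

/-! ### The function `p u t = P (S u < t)` and `D t = ∫_0^∞ p u t du` -/

noncomputable def pf (u t : ℝ) : ℝ≥0∞ := P {ω | S ω u < t}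

noncomputable def Df (t : ℝ) : ℝ≥0∞ := ∫⁻ u in Set.Ioi (0 : ℝ), pf P S u t

lemma pf_meas (hS : IsStableSubordinator β P S) :
    Measurable fun q : ℝ × ℝ => pf P S q.1 q.2 := by
  have hs : MeasurableSet {p : (ℝ × ℝ) × Ω | S p.2 p.1.1 < p.1.2} := by
    have h1 : Measurable fun p : (ℝ × ℝ) × Ω => S p.2 p.1.1 :=
      (measS P S hS).comp (measurable_snd.prodMk (measurable_fst.comp measurable_fst))
    exact measurableSet_lt h1 (measurable_snd.comp measurable_fst)
  exact measurable_measure_prodMk_left hs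

lemma pf_le_one (u t : ℝ) : pf P S u t ≤ 1 := by
  rw [← measure_univ (μ := P)]
  exact measure_mono (Set.subset_univ _)

lemma pf_mono (u : ℝ) : Monotone (pf P S u) := by
  intro s t hst
  exact measure_mono fun ω hω => lt_of_lt_of_le hω hst

/-- basic improper exponential integral -/
lemma integral_exp_Ioi (a : ℝ) {c : ℝ} (hc : 0 < c) :
    ∫ t in Set.Ioi a, Real.exp (-(c * t)) = Real.exp (-(c * a)) / c := by
  have h := integral_comp_mul_left_Ioi (fun x => Real.exp (-x)) a hc
  simp only [smul_eq_mul] at h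
  rw [h, integral_exp_neg_Ioi]
  rw [div_eq_inv_mul]

lemma lintegral_exp_Ioi (a : ℝ) {c : ℝ} (hc : 0 < c) :
    ∫⁻ t in Set.Ioi a, ENNReal.ofReal (Real.exp (-(c * t)))
      = ENNReal.ofReal (Real.exp (-(c * a)) / c) := by
  rw [← integral_exp_Ioi a hc]
  rw [← ofReal_integral_eq_lintegral_ofReal]
  · have : ∀ x : ℝ, Real.exp (-(c * x)) = Real.exp (-c * x) := by intro x; ring_nf
    simp only [this]
    exact exp_neg_integrableOn_Ioi a hc
  · exact Filter.Eventually.of_forall fun x => (Real.exp_pos _).le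

lemma lintegral_exp_neg_S (hS : IsStableSubordinator β P S) {θ u : ℝ}
    (hθ : 0 ≤ θ) (hu : 0 ≤ u) :
    ∫⁻ ω, ENNReal.ofReal (Real.exp (-(θ * S ω u))) ∂P
      = ENNReal.ofReal (Real.exp (-(u * θ ^ β))) := by
  have hL := hS.laplace θ hθ 0 u le_rfl hu
  have heq : ∀ ω, Real.exp (-θ * (S ω u - S ω 0)) = Real.exp (-(θ * S ω u)) := by
    intro ω; rw [hS.zero ω]; ring_nf
  rw [funext heq] at hL
  rw [← ofReal_integral_eq_lintegral_ofReal, hL]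
  · congr 1
    rw [sub_zero, neg_mul]
  · refine Integrable.mono' (integrable_const 1)
      ((hS.meas u).const_mul θ).neg.exp.aestronglyMeasurable
      (Filter.Eventually.of_forall fun ω => ?_)
    rw [Real.norm_eq_abs, abs_of_pos (Real.exp_pos _)]
    refine Real.exp_le_one_iff.2 ?_
    have := S_nonneg P S hS ω hu
    have : 0 ≤ θ * S ω u := mul_nonneg hθ this
    linarith
  · exact Filter.Eventually.of_forall fun ω => (Real.exp_pos _).le

lemma pf_le (hS : IsStableSubordinator β P S) (hβ1 : β ≤ 1) {u : ℝ} (hu : 0 ≤ u) (t : ℝ) :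
    pf P S u t ≤ ENNReal.ofReal (Real.exp (t / 2) * Real.exp (-(u / 2))) := by
  have hhalf : (0:ℝ) ≤ 1/2 := by norm_num
  have hmar := mul_meas_ge_le_lintegral₀ (μ := P)
    (f := fun ω => ENNReal.ofReal (Real.exp (-((1/2 : ℝ) * S ω u))))
    (((hS.meas u).const_mul _).neg.exp.ennreal_ofReal.aemeasurable)
    (ENNReal.ofReal (Real.exp (-((1/2 : ℝ) * t))))
  rw [lintegral_exp_neg_S P S hS hhalf hu] at hmar
  have hsub : {ω | S ω u < t} ⊆
      {ω | ENNReal.ofReal (Real.exp (-((1/2:ℝ) * t)))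
        ≤ ENNReal.ofReal (Real.exp (-((1/2:ℝ) * S ω u)))} := by
    intro ω hω
    exact ENNReal.ofReal_le_ofReal (Real.exp_le_exp.2 (by simp only [neg_le_neg_iff]; linarith [Set.mem_setOf_eq ▸ hω]))
  have h1 : ENNReal.ofReal (Real.exp (-((1/2:ℝ) * t))) * pf P S u t
      ≤ ENNReal.ofReal (Real.exp (-(u * (1/2:ℝ) ^ β))) :=
    le_trans (mul_le_mul_right (measure_mono hsub) _) hmar
  have h2 : Real.exp (-(u * (1/2:ℝ) ^ β)) ≤ Real.exp (-(u / 2)) := by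
    apply Real.exp_le_exp.2
    rw [neg_le_neg_iff]
    have : (1/2 : ℝ) ^ (1:ℝ) ≤ (1/2 : ℝ) ^ β :=
      Real.rpow_le_rpow_of_exponent_ge (by norm_num) (by norm_num) hβ1
    rw [Real.rpow_one] at this
    calc u / 2 = u * (1/2) := by ring
    _ ≤ u * (1/2:ℝ) ^ β := by exact mul_le_mul_of_nonneg_left this hu
  calc pf P S u t = ENNReal.ofReal (Real.exp (t/2)) * (ENNReal.ofReal (Real.exp (-((1/2:ℝ) * t))) * pf P S u t) := by
        rw [← mul_assoc, ← ENNReal.ofReal_mul (Real.exp_pos _).le, ← Real.exp_add]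
        have h0 : t/2 + -(1/2 * t) = 0 := by ring
        rw [h0, Real.exp_zero, ENNReal.ofReal_one, one_mul]
  _ ≤ ENNReal.ofReal (Real.exp (t/2)) * ENNReal.ofReal (Real.exp (-(u * (1/2:ℝ) ^ β))) :=
        mul_le_mul_right h1 _
  _ ≤ ENNReal.ofReal (Real.exp (t / 2) * Real.exp (-(u / 2))) := by
        rw [← ENNReal.ofReal_mul (Real.exp_pos _).le]
        exact ENNReal.ofReal_le_ofReal (mul_le_mul_of_nonneg_left h2 (Real.exp_pos _).le)

lemma Df_le (hS : IsStableSubordinator β P S) (hβ1 : β ≤ 1) (t : ℝ) :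
    Df P S t ≤ ENNReal.ofReal (Real.exp (t / 2) * 2) := by
  have h1 : Df P S t ≤ ∫⁻ u in Set.Ioi (0:ℝ),
      ENNReal.ofReal (Real.exp (t/2)) * ENNReal.ofReal (Real.exp (-((1/2:ℝ) * u))) := by
    apply setLIntegral_mono' measurableSet_Ioi
    intro u hu
    rw [← ENNReal.ofReal_mul (Real.exp_pos _).le]
    have := pf_le P S hS hβ1 (le_of_lt hu) t
    convert this using 3
    ring
  have hm : Measurable fun u : ℝ => ENNReal.ofReal (Real.exp (-(1/2 * u))) :=
    ((measurable_const.mul measurable_id).neg.exp).ennreal_ofReal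
  rw [lintegral_const_mul _ hm, lintegral_exp_Ioi 0 (by norm_num : (0:ℝ) < 1/2)] at h1
  calc Df P S t ≤ _ := h1
  _ ≤ ENNReal.ofReal (Real.exp (t / 2) * 2) := by
      rw [← ENNReal.ofReal_mul (Real.exp_pos _).le]
      apply ENNReal.ofReal_le_ofReal
      rw [mul_zero, neg_zero, Real.exp_zero]
      norm_num

lemma Df_ne_top (hS : IsStableSubordinator β P S) (hβ1 : β ≤ 1) (t : ℝ) :
    Df P S t ≠ ∞ :=
  fun h => (h ▸ Df_le P S hS hβ1 t).trans_lt ENNReal.ofReal_lt_top |>.false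

lemma Df_mono : Monotone (Df P S) := by
  intro s t hst
  exact lintegral_mono fun u => pf_mono P S u hst

lemma Df_meas (hS : IsStableSubordinator β P S) : Measurable (Df P S) := by
  apply Measurable.lintegral_prod_right' (f := fun q : ℝ × ℝ => pf P S q.2 q.1)
  exact (pf_meas P S hS).comp (measurable_snd.prodMk measurable_fst)

/-! ### Laplace transform of `D` -/

lemma laplace_Df (hS : IsStableSubordinator β P S) (hβ0 : 0 < β) {θ : ℝ} (hθ : 0 < θ) :
    ∫⁻ t in Set.Ioi (0 : ℝ), ENNReal.ofReal (Real.exp (-(θ * t))) * Df P S t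
      = ENNReal.ofReal (θ⁻¹ * (θ ^ β)⁻¹) := by
  have hθβ : 0 < θ ^ β := Real.rpow_pos_of_pos hθ β
  -- the inner integral over `t` and `ω` for fixed `u ≥ 0`
  have key : ∀ u : ℝ, 0 ≤ u →
      ∫⁻ t in Set.Ioi (0:ℝ), ENNReal.ofReal (Real.exp (-(θ * t))) * pf P S u t
        = ENNReal.ofReal θ⁻¹ * ENNReal.ofReal (Real.exp (-(u * θ ^ β))) := by
    intro u hu
    have hind : ∀ (ω : Ω) (t : ℝ),
        Set.indicator (Set.Ioi (S ω u)) (fun _ => (1:ℝ≥0∞)) t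
          = Set.indicator {ω' : Ω | S ω' u < t} (fun _ => (1:ℝ≥0∞)) ω := by
      intro ω t
      by_cases h : S ω u < t
      · rw [Set.indicator_of_mem (Set.mem_Ioi.2 h),
          Set.indicator_of_mem (show ω ∈ {ω' : Ω | S ω' u < t} from h)]
      · rw [Set.indicator_of_notMem (fun hh => h (Set.mem_Ioi.1 hh)),
          Set.indicator_of_notMem (show ω ∉ {ω' : Ω | S ω' u < t} from h)]
    have hmes : Measurable fun p : ℝ × Ω => ENNReal.ofReal (Real.exp (-(θ * p.1))) *
        Set.indicator (Set.Ioi (S p.2 u)) (fun _ => (1:ℝ≥0∞)) p.1 := by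
      apply Measurable.mul
      · exact ((measurable_const.mul measurable_fst).neg.exp).ennreal_ofReal
      · have heq : ∀ p : ℝ × Ω, Set.indicator (Set.Ioi (S p.2 u)) (fun _ => (1:ℝ≥0∞)) p.1
            = Set.indicator {p : ℝ × Ω | S p.2 u < p.1} (fun _ => (1:ℝ≥0∞)) p := by
          intro p
          by_cases h : S p.2 u < p.1
          · rw [Set.indicator_of_mem (Set.mem_Ioi.2 h),
              Set.indicator_of_mem (show p ∈ {p : ℝ × Ω | S p.2 u < p.1} from h)]
          · rw [Set.indicator_of_notMem (fun hh => h (Set.mem_Ioi.1 hh)),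
              Set.indicator_of_notMem (show p ∉ {p : ℝ × Ω | S p.2 u < p.1} from h)]
        rw [funext heq]
        exact (measurable_const (a := (1:ℝ≥0∞))).indicator
          (measurableSet_lt ((hS.meas u).comp measurable_snd) measurable_fst)
    have hswap := lintegral_lintegral_swap (μ := volume.restrict (Set.Ioi (0:ℝ))) (ν := P)
      (f := fun t ω => ENNReal.ofReal (Real.exp (-(θ * t))) *
        Set.indicator (Set.Ioi (S ω u)) (fun _ => (1:ℝ≥0∞)) t) hmes.aemeasurable
    have hL : ∫⁻ t in Set.Ioi (0:ℝ), ENNReal.ofReal (Real.exp (-(θ * t))) * pf P S u t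
        = ∫⁻ t in Set.Ioi (0:ℝ), ∫⁻ ω, ENNReal.ofReal (Real.exp (-(θ * t))) *
            Set.indicator (Set.Ioi (S ω u)) (fun _ => (1:ℝ≥0∞)) t ∂P := by
      refine setLIntegral_congr_fun measurableSet_Ioi
        (fun t _ => ?_)
      have hsett : MeasurableSet {ω' : Ω | S ω' u < t} := (hS.meas u) measurableSet_Iio
      have hindm : Measurable fun ω : Ω =>
          Set.indicator {ω' : Ω | S ω' u < t} (fun _ => (1:ℝ≥0∞)) ω :=
        (measurable_const (a := (1:ℝ≥0∞))).indicator hsett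
      calc ENNReal.ofReal (Real.exp (-(θ * t))) * pf P S u t
          = ENNReal.ofReal (Real.exp (-(θ * t))) *
            ∫⁻ ω, Set.indicator {ω' : Ω | S ω' u < t} (fun _ => (1:ℝ≥0∞)) ω ∂P := by
            rw [lintegral_indicator_const hsett, one_mul]; rfl
        _ = ∫⁻ ω, ENNReal.ofReal (Real.exp (-(θ * t))) *
            Set.indicator {ω' : Ω | S ω' u < t} (fun _ => (1:ℝ≥0∞)) ω ∂P :=
            (lintegral_const_mul _ hindm).symm
        _ = _ := by
            refine lintegral_congr fun ω => ?_
            rw [hind ω t]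
    have hR : ∀ ω : Ω, ∫⁻ t in Set.Ioi (0:ℝ), ENNReal.ofReal (Real.exp (-(θ * t))) *
        Set.indicator (Set.Ioi (S ω u)) (fun _ => (1:ℝ≥0∞)) t
          = ENNReal.ofReal θ⁻¹ * ENNReal.ofReal (Real.exp (-(θ * S ω u))) := by
      intro ω
      have h1 : ∀ t : ℝ, ENNReal.ofReal (Real.exp (-(θ * t))) *
          Set.indicator (Set.Ioi (S ω u)) (fun _ => (1:ℝ≥0∞)) t
            = Set.indicator (Set.Ioi (S ω u))
                (fun t => ENNReal.ofReal (Real.exp (-(θ * t)))) t := by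
        intro t
        by_cases h : t ∈ Set.Ioi (S ω u)
        · rw [Set.indicator_of_mem h, Set.indicator_of_mem h, mul_one]
        · rw [Set.indicator_of_notMem h, Set.indicator_of_notMem h, mul_zero]
      rw [funext h1, lintegral_indicator measurableSet_Ioi,
        Measure.restrict_restrict measurableSet_Ioi]
      have h2 : Set.Ioi (S ω u) ∩ Set.Ioi (0:ℝ) = Set.Ioi (S ω u) := by
        rw [Set.Ioi_inter_Ioi, sup_eq_left.2 (S_nonneg P S hS ω hu)]
      rw [h2, lintegral_exp_Ioi (S ω u) hθ, div_eq_inv_mul,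
        ENNReal.ofReal_mul (by positivity)]
    rw [hL, hswap]
    have hmω : Measurable fun ω : Ω => ENNReal.ofReal (Real.exp (-(θ * S ω u))) :=
      (((hS.meas u).const_mul θ).neg.exp).ennreal_ofReal
    calc ∫⁻ ω, (∫⁻ t in Set.Ioi (0:ℝ), ENNReal.ofReal (Real.exp (-(θ * t))) *
          Set.indicator (Set.Ioi (S ω u)) (fun _ => (1:ℝ≥0∞)) t) ∂P
        = ∫⁻ ω, ENNReal.ofReal θ⁻¹ * ENNReal.ofReal (Real.exp (-(θ * S ω u))) ∂P :=
          lintegral_congr fun ω => hR ω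
      _ = ENNReal.ofReal θ⁻¹ * ∫⁻ ω, ENNReal.ofReal (Real.exp (-(θ * S ω u))) ∂P :=
          lintegral_const_mul _ hmω
      _ = ENNReal.ofReal θ⁻¹ * ENNReal.ofReal (Real.exp (-(u * θ ^ β))) := by
          rw [lintegral_exp_neg_S P S hS hθ.le hu]
  -- now the outer integral over `u`
  have hDf : ∀ t : ℝ, ENNReal.ofReal (Real.exp (-(θ * t))) * Df P S t
      = ∫⁻ u in Set.Ioi (0:ℝ), ENNReal.ofReal (Real.exp (-(θ * t))) * pf P S u t := by
    intro t
    rw [Df, lintegral_const_mul]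
    exact (pf_meas P S hS).comp (measurable_id.prodMk measurable_const)
  have hmes2 : Measurable fun p : ℝ × ℝ =>
      ENNReal.ofReal (Real.exp (-(θ * p.1))) * pf P S p.2 p.1 := by
    apply Measurable.mul
    · exact ((measurable_const.mul measurable_fst).neg.exp).ennreal_ofReal
    · exact (pf_meas P S hS).comp (measurable_snd.prodMk measurable_fst)
  have hswap2 := lintegral_lintegral_swap (μ := volume.restrict (Set.Ioi (0:ℝ)))
    (ν := volume.restrict (Set.Ioi (0:ℝ)))
    (f := fun t u => ENNReal.ofReal (Real.exp (-(θ * t))) * pf P S u t) hmes2.aemeasurable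
  calc ∫⁻ t in Set.Ioi (0 : ℝ), ENNReal.ofReal (Real.exp (-(θ * t))) * Df P S t
      = ∫⁻ t in Set.Ioi (0:ℝ), ∫⁻ u in Set.Ioi (0:ℝ),
          ENNReal.ofReal (Real.exp (-(θ * t))) * pf P S u t := by
        exact lintegral_congr fun t => hDf t
    _ = ∫⁻ u in Set.Ioi (0:ℝ), ∫⁻ t in Set.Ioi (0:ℝ),
          ENNReal.ofReal (Real.exp (-(θ * t))) * pf P S u t := hswap2
    _ = ∫⁻ u in Set.Ioi (0:ℝ),
          ENNReal.ofReal θ⁻¹ * ENNReal.ofReal (Real.exp (-(θ ^ β * u))) := by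
        refine setLIntegral_congr_fun measurableSet_Ioi
          (fun u hu => ?_)
        rw [key u (le_of_lt hu), mul_comm u (θ ^ β)]
    _ = ENNReal.ofReal θ⁻¹ * ENNReal.ofReal (Real.exp (-(θ ^ β * 0)) / θ ^ β) := by
        have hmu : Measurable fun u : ℝ => ENNReal.ofReal (Real.exp (-(θ ^ β * u))) :=
          ((measurable_const.mul measurable_id).neg.exp).ennreal_ofReal
        rw [lintegral_const_mul _ hmu, lintegral_exp_Ioi 0 hθβ]
    _ = ENNReal.ofReal (θ⁻¹ * (θ ^ β)⁻¹) := by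
        rw [mul_zero, neg_zero, Real.exp_zero, ← ENNReal.ofReal_mul (by positivity)]
        rw [one_div]

noncomputable def Dr (t : ℝ) : ℝ := (Df P S t).toReal

lemma Dr_nonneg (t : ℝ) : 0 ≤ Dr P S t := ENNReal.toReal_nonneg

lemma Dr_meas (hS : IsStableSubordinator β P S) : Measurable (Dr P S) :=
  (Df_meas P S hS).ennreal_toReal

lemma Dr_le (hS : IsStableSubordinator β P S) (hβ1 : β ≤ 1) (t : ℝ) :
    Dr P S t ≤ Real.exp (t / 2) * 2 := by
  have := Df_le P S hS hβ1 t
  rw [Dr]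
  calc (Df P S t).toReal ≤ (ENNReal.ofReal (Real.exp (t / 2) * 2)).toReal :=
    ENNReal.toReal_mono ENNReal.ofReal_ne_top this
  _ = Real.exp (t / 2) * 2 := ENNReal.toReal_ofReal (by positivity)

lemma laplace_Dr (hS : IsStableSubordinator β P S) (hβ0 : 0 < β) (hβ1 : β ≤ 1)
    {θ : ℝ} (hθ : 0 < θ) :
    ∫ t in Set.Ioi (0 : ℝ), Real.exp (-(θ * t)) * Dr P S t = θ⁻¹ * (θ ^ β)⁻¹ := by
  have hmes : AEMeasurable (fun t => Real.exp (-(θ * t)) * Dr P S t)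
      (volume.restrict (Set.Ioi (0:ℝ))) :=
    (((measurable_const.mul measurable_id).neg.exp).mul (Dr_meas P S hS)).aemeasurable
  rw [integral_eq_lintegral_of_nonneg_ae
    (Filter.Eventually.of_forall fun t => mul_nonneg (Real.exp_pos _).le (Dr_nonneg P S t))
    hmes.aestronglyMeasurable]
  have heq : ∀ t : ℝ, ENNReal.ofReal (Real.exp (-(θ * t)) * Dr P S t)
      = ENNReal.ofReal (Real.exp (-(θ * t))) * Df P S t := by
    intro t
    rw [ENNReal.ofReal_mul (Real.exp_pos _).le, Dr,
      ENNReal.ofReal_toReal (Df_ne_top P S hS hβ1 t)]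
  rw [funext heq] at *
  rw [show (∫⁻ t in Set.Ioi (0:ℝ), ENNReal.ofReal (Real.exp (-(θ * t))) * Df P S t)
      = ENNReal.ofReal (θ⁻¹ * (θ ^ β)⁻¹) from laplace_Df P S hS hβ0 hθ]
  exact ENNReal.toReal_ofReal (by positivity)

lemma integrable_exp_Dr (hS : IsStableSubordinator β P S) (hβ1 : β ≤ 1)
    {θ : ℝ} (hθ : 1 ≤ θ) :
    IntegrableOn (fun t => Real.exp (-(θ * t)) * Dr P S t) (Set.Ioi (0 : ℝ)) := by
  refine Integrable.mono' ((exp_neg_integrableOn_Ioi 0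
    (by norm_num : (0:ℝ) < 1/2)).const_mul 2)
    (((measurable_const.mul measurable_id).neg.exp).mul
      (Dr_meas P S hS)).aestronglyMeasurable
    (ae_restrict_of_forall_mem measurableSet_Ioi fun t ht => ?_)
  rw [Real.norm_eq_abs, abs_of_nonneg (mul_nonneg (Real.exp_pos _).le (Dr_nonneg P S t))]
  have h1 : Dr P S t ≤ Real.exp (t/2) * 2 := Dr_le P S hS hβ1 t
  have h2 : Real.exp (-(θ * t)) ≤ Real.exp (-t) := by
    apply Real.exp_le_exp.2
    have ht' : (0:ℝ) < t := ht
    nlinarith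
  calc Real.exp (-(θ * t)) * Dr P S t ≤ Real.exp (-t) * (Real.exp (t/2) * 2) := by
        apply mul_le_mul h2 h1 (Dr_nonneg P S t) (Real.exp_pos _).le
  _ = 2 * Real.exp (-(1/2) * t) := by
        rw [show -(1/2 : ℝ) * t = -t + t/2 by ring, Real.exp_add]
        ring

/-! ### The Gamma integral -/

lemma integrable_exp_rpow (hβ0 : 0 < β) {θ : ℝ} (hθ : 0 < θ) :
    IntegrableOn (fun t => Real.exp (-(θ * t)) * t ^ β) (Set.Ioi (0 : ℝ)) := by
  have h0 := Real.GammaIntegral_convergent (s := β + 1) (by linarith)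
  have h1 : IntegrableOn (fun t : ℝ => Real.exp (-(θ * t)) * (θ * t) ^ β) (Set.Ioi 0) := by
    have := (integrableOn_Ioi_comp_mul_left_iff
      (fun x : ℝ => Real.exp (-x) * x ^ (β + 1 - 1)) 0 hθ).2 (by rwa [mul_zero])
    simpa [add_sub_cancel_right] using this
  have h2 : ∀ t ∈ Set.Ioi (0:ℝ), Real.exp (-(θ * t)) * (θ * t) ^ β
      = θ ^ β * (Real.exp (-(θ * t)) * t ^ β) := by
    intro t ht
    rw [Real.mul_rpow hθ.le (le_of_lt ht)]
    ring
  have h3 : IntegrableOn (fun t : ℝ => θ ^ β * (Real.exp (-(θ * t)) * t ^ β)) (Set.Ioi 0) :=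
    (integrableOn_congr_fun h2 measurableSet_Ioi).1 h1
  have h4 := h3.const_mul (θ ^ β)⁻¹
  have hβθ : (θ:ℝ) ^ β ≠ 0 := (Real.rpow_pos_of_pos hθ β).ne'
  refine (integrableOn_congr_fun (fun t _ => ?_) measurableSet_Ioi).1 h4
  field_simp

lemma integral_exp_rpow (hβ0 : 0 < β) {θ : ℝ} (hθ : 0 < θ) :
    ∫ t in Set.Ioi (0 : ℝ), Real.exp (-(θ * t)) * t ^ β
      = Real.Gamma (β + 1) * (θ⁻¹ * (θ ^ β)⁻¹) := by
  have hβθ : (0:ℝ) < θ ^ β := Real.rpow_pos_of_pos hθ β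
  have hG : Real.Gamma (β + 1) = ∫ t in Set.Ioi (0:ℝ), Real.exp (-t) * t ^ β := by
    rw [Real.Gamma_eq_integral (by linarith : (0:ℝ) < β + 1)]
    simp [add_sub_cancel_right]
  have hsub := integral_comp_mul_left_Ioi (fun x : ℝ => Real.exp (-x) * x ^ β) 0 hθ
  rw [mul_zero] at hsub
  rw [← hG] at hsub
  have h2 : ∀ t ∈ Set.Ioi (0:ℝ), Real.exp (-(θ * t)) * (θ * t) ^ β
      = θ ^ β * (Real.exp (-(θ * t)) * t ^ β) := by
    intro t ht
    rw [Real.mul_rpow hθ.le (le_of_lt ht)]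
    ring
  have h3 : (∫ t in Set.Ioi (0:ℝ), Real.exp (-(θ * t)) * (θ * t) ^ β)
      = θ ^ β * ∫ t in Set.Ioi (0:ℝ), Real.exp (-(θ * t)) * t ^ β := by
    rw [← integral_const_mul]
    exact setIntegral_congr_fun measurableSet_Ioi h2
  rw [show (fun x : ℝ => Real.exp (-(θ * x)) * (θ * x) ^ β)
      = fun x : ℝ => (fun y : ℝ => Real.exp (-y) * y ^ β) (θ * x) from rfl] at h3
  rw [hsub, smul_eq_mul] at h3
  have h5 : (∫ t in Set.Ioi (0:ℝ), Real.exp (-(θ * t)) * t ^ β)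
      = θ⁻¹ * Real.Gamma (β + 1) / θ ^ β := by
    rw [eq_div_iff hβθ.ne']
    rw [mul_comm]
    exact h3.symm
  rw [h5, div_eq_mul_inv]; ring

/-! ### The difference function and its vanishing -/

noncomputable def gf (t : ℝ) : ℝ := Dr P S t - (Real.Gamma (β + 1))⁻¹ * t ^ β

lemma integrable_exp_gf (hS : IsStableSubordinator β P S) (hβ0 : 0 < β) (hβ1 : β ≤ 1)
    {θ : ℝ} (hθ : 1 ≤ θ) :
    IntegrableOn (fun t => Real.exp (-(θ * t)) * gf P S (β := β) t) (Set.Ioi (0 : ℝ)) := by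
  have h1 := integrable_exp_Dr P S hS hβ1 hθ
  have h2 := (integrable_exp_rpow hβ0 (by linarith : (0:ℝ) < θ)).const_mul
    (Real.Gamma (β + 1))⁻¹
  have h3 := h1.sub h2
  refine (integrableOn_congr_fun (fun t _ => ?_) measurableSet_Ioi).2 h3
  simp only [gf, Pi.sub_apply]
  ring

lemma moments_zero (hS : IsStableSubordinator β P S) (hβ0 : 0 < β) (hβ1 : β ≤ 1)
    {θ : ℝ} (hθ : 1 ≤ θ) :
    ∫ t in Set.Ioi (0 : ℝ), Real.exp (-(θ * t)) * gf P S (β := β) t = 0 := by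
  have hθ0 : (0:ℝ) < θ := lt_of_lt_of_le one_pos hθ
  have h1 := integrable_exp_Dr P S hS hβ1 hθ
  have h2 := (integrable_exp_rpow hβ0 hθ0).const_mul (Real.Gamma (β + 1))⁻¹
  have hG : (0:ℝ) < Real.Gamma (β + 1) := Real.Gamma_pos_of_pos (by linarith)
  have hcong : ∀ t ∈ Set.Ioi (0:ℝ), Real.exp (-(θ * t)) * gf P S (β := β) t
      = Real.exp (-(θ * t)) * Dr P S t
        - (Real.Gamma (β + 1))⁻¹ * (Real.exp (-(θ * t)) * t ^ β) := by
    intro t _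
    simp only [gf]
    ring
  rw [setIntegral_congr_fun measurableSet_Ioi hcong, integral_sub h1 h2,
    laplace_Dr P S hS hβ0 hβ1 hθ0, integral_const_mul, integral_exp_rpow hβ0 hθ0]
  field_simp
  simp

lemma test_zero (hS : IsStableSubordinator β P S) (hβ0 : 0 < β) (hβ1 : β ≤ 1)
    (φ : ℝ → ℝ) (hφ : Continuous φ) (hsupp : HasCompactSupport φ) :
    ∫ t in Set.Ioi (0 : ℝ), φ t * gf P S (β := β) t = 0 := by
  classical
  -- an integrable weight dominating everything
  have hgint : IntegrableOn (fun t => Real.exp (-(1 * t)) * gf P S (β := β) t)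
      (Set.Ioi (0:ℝ)) := integrable_exp_gf P S hS hβ0 hβ1 le_rfl
  have hCint : IntegrableOn (fun t => Real.exp (-t) * |gf P S (β := β) t|)
      (Set.Ioi (0:ℝ)) := by
    have h := hgint.abs
    refine (integrableOn_congr_fun (fun t _ => ?_) measurableSet_Ioi).2 h
    rw [abs_mul, abs_of_pos (Real.exp_pos _), one_mul]
  set C := ∫ t in Set.Ioi (0:ℝ), Real.exp (-t) * |gf P S (β := β) t| with hC
  have hCnn : 0 ≤ C := setIntegral_nonneg measurableSet_Ioi
    (fun t _ => mul_nonneg (Real.exp_pos _).le (abs_nonneg _))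
  -- support/bound data for φ
  obtain ⟨r, hr⟩ := hsupp.isBounded.subset_closedBall 0
  set K := |r| + 1 with hK
  have hKpos : 0 < K := by positivity
  have hφzero : ∀ t : ℝ, K ≤ |t| → φ t = 0 := by
    intro t ht
    apply image_eq_zero_of_notMem_tsupport
    intro hmem
    have := hr hmem
    rw [Metric.mem_closedBall, Real.dist_eq, sub_zero] at this
    have : |t| ≤ |r| := le_trans this (le_abs_self r)
    linarith
  obtain ⟨Mφ, hMφ⟩ := hsupp.exists_bound_of_continuous hφ
  have hMφnn : 0 ≤ Mφ := le_trans (norm_nonneg (φ 0)) (hMφ 0)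
  -- integrability of φ * g on (0,∞)
  have hφbd : ∀ t : ℝ, 0 < t → |φ t| ≤ Mφ * Real.exp K * Real.exp (-t) := by
    intro t ht
    by_cases htK : K ≤ |t|
    · rw [hφzero t htK, abs_zero]; positivity
    · push_neg at htK
      have h1 : |φ t| ≤ Mφ := by rw [← Real.norm_eq_abs]; exact hMφ t
      have h2 : Real.exp (-K) ≤ Real.exp (-t) := by
        apply Real.exp_le_exp.2
        have : t ≤ |t| := le_abs_self t
        linarith
      calc |φ t| ≤ Mφ := h1
      _ = Mφ * Real.exp K * Real.exp (-K) := by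
          rw [mul_assoc, ← Real.exp_add]; simp
      _ ≤ Mφ * Real.exp K * Real.exp (-t) := by
          apply mul_le_mul_of_nonneg_left h2 (by positivity)
  have hφgint : IntegrableOn (fun t => φ t * gf P S (β := β) t) (Set.Ioi (0:ℝ)) := by
    refine Integrable.mono' (hCint.const_mul (Mφ * Real.exp K))
      ((hφ.measurable.mul ((Dr_meas P S hS).sub
        (measurable_const.mul ((Real.continuous_rpow_const hβ0.le).measurable)))).aestronglyMeasurable)
      (ae_restrict_of_forall_mem measurableSet_Ioi fun t ht => ?_)
    rw [Real.norm_eq_abs, abs_mul]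
    calc |φ t| * |gf P S (β := β) t|
        ≤ (Mφ * Real.exp K * Real.exp (-t)) * |gf P S (β := β) t| :=
          mul_le_mul_of_nonneg_right (hφbd t ht) (abs_nonneg _)
      _ = Mφ * Real.exp K * (Real.exp (-t) * |gf P S (β := β) t|) := by ring
  -- the polynomial part integrates to zero
  have hpoly : ∀ p : Polynomial ℝ,
      (IntegrableOn (fun t => Real.exp (-t) * Polynomial.eval (Real.exp (-t)) p *
        gf P S (β := β) t) (Set.Ioi (0:ℝ))) ∧
      (∫ t in Set.Ioi (0:ℝ), Real.exp (-t) * Polynomial.eval (Real.exp (-t)) p *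
        gf P S (β := β) t) = 0 := by
    intro p
    have hterm : ∀ k : ℕ, IntegrableOn
        (fun t => p.coeff k * (Real.exp (-t) ^ (k + 1) * gf P S (β := β) t))
        (Set.Ioi (0:ℝ)) := by
      intro k
      have h := (integrable_exp_gf P S hS hβ0 hβ1
        (by exact_mod_cast le_add_of_nonneg_left (Nat.cast_nonneg k)
          : (1:ℝ) ≤ (k:ℝ) + 1)).const_mul (p.coeff k)
      refine (integrableOn_congr_fun (fun t _ => ?_) measurableSet_Ioi).2 h
      rw [show Real.exp (-t) ^ (k + 1) = Real.exp (((k:ℕ) + 1 : ℕ) * (-t)) from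
        (Real.exp_nat_mul _ _).symm]
      push_cast
      ring_nf
    have htermint : ∀ k : ℕ,
        (∫ t in Set.Ioi (0:ℝ), p.coeff k * (Real.exp (-t) ^ (k + 1) *
          gf P S (β := β) t)) = 0 := by
      intro k
      rw [integral_const_mul]
      have hm := moments_zero P S hS hβ0 hβ1
        (show (1:ℝ) ≤ (k:ℝ) + 1 by exact_mod_cast le_add_of_nonneg_left (Nat.cast_nonneg k))
      rw [show (∫ t in Set.Ioi (0:ℝ), Real.exp (-t) ^ (k + 1) * gf P S (β := β) t)
          = ∫ t in Set.Ioi (0:ℝ), Real.exp (-(((k:ℝ) + 1) * t)) * gf P S (β := β) t from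
        setIntegral_congr_fun measurableSet_Ioi fun t _ => by
          rw [show Real.exp (-t) ^ (k + 1) = Real.exp (((k:ℕ) + 1 : ℕ) * (-t)) from
            (Real.exp_nat_mul _ _).symm]
          push_cast
          ring_nf, hm, mul_zero]
    have hsum : ∀ t : ℝ, Real.exp (-t) * Polynomial.eval (Real.exp (-t)) p *
        gf P S (β := β) t
          = ∑ k ∈ Finset.range (p.natDegree + 1),
            p.coeff k * (Real.exp (-t) ^ (k + 1) * gf P S (β := β) t) := by
      intro t
      rw [Polynomial.eval_eq_sum_range, Finset.mul_sum, Finset.sum_mul]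
      refine Finset.sum_congr rfl fun k _ => ?_
      ring
    constructor
    · refine (integrableOn_congr_fun (fun t _ => hsum t) measurableSet_Ioi).2 ?_
      exact integrable_finset_sum _ fun k _ => hterm k
    · rw [setIntegral_congr_fun measurableSet_Ioi (fun t _ => hsum t),
        integral_finset_sum _ fun k _ => hterm k]
      exact Finset.sum_eq_zero fun k _ => htermint k
  -- the approximation argument
  have hmain : ∀ η : ℝ, 0 < η →
      |∫ t in Set.Ioi (0:ℝ), φ t * gf P S (β := β) t| ≤ η * C := by
    intro η hη
    -- the rescaled function on [0,1]
    set ψ : ℝ → ℝ := fun s => if 0 < s then φ (-Real.log s) * s⁻¹ else 0 with hψ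
    have hψcont : ContinuousOn ψ (Set.Icc 0 1) := by
      intro s hs
      rcases lt_or_eq_of_le hs.1 with hs0 | hs0
      · have hev : ∀ᶠ x in nhds s, ψ x = φ (-Real.log x) * x⁻¹ := by
          filter_upwards [IsOpen.mem_nhds isOpen_Ioi hs0] with x hx
          rw [hψ]; simp only [if_pos (Set.mem_Ioi.1 hx)]
        have hcont : ContinuousAt (fun x => φ (-Real.log x) * x⁻¹) s := by
          apply ContinuousAt.mul
          · exact hφ.continuousAt.comp ((Real.continuousAt_log hs0.ne').neg)
          · exact continuousAt_inv₀ hs0.ne'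
        exact (hcont.congr (Filter.EventuallyEq.symm hev)).continuousWithinAt
      · -- s = 0
        rw [← hs0]
        have hev : ∀ᶠ x in nhdsWithin (0:ℝ) (Set.Icc 0 1), ψ x = 0 := by
          have hmem : Set.Iio (Real.exp (-K)) ∈ nhdsWithin (0:ℝ) (Set.Icc 0 1) :=
            nhdsWithin_le_nhds (IsOpen.mem_nhds isOpen_Iio (by
              simp only [Set.mem_Iio]; positivity))
          filter_upwards [hmem, self_mem_nhdsWithin] with x hx1 hx2
          rw [hψ]
          by_cases hx0 : 0 < x
          · simp only [if_pos hx0]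
            have hlog : K ≤ |(-Real.log x)| := by
              have h1 : Real.log x < -K := by
                have := Real.log_lt_log hx0 hx1
                rwa [Real.log_exp] at this
              rw [abs_neg, abs_of_neg (by linarith : Real.log x < 0)]
              linarith
            rw [hφzero _ hlog, zero_mul]
          · simp only [if_neg hx0]
        refine (continuousWithinAt_const (b := (0:ℝ))).congr_of_eventuallyEq hev ?_
        rw [hψ]; simp
    obtain ⟨p, hp⟩ := exists_polynomial_near_of_continuousOn 0 1 ψ hψcont η hη
    -- pointwise bound
    have hptw : ∀ t : ℝ, 0 < t →
        |φ t - Real.exp (-t) * Polynomial.eval (Real.exp (-t)) p| ≤ η * Real.exp (-t) := by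
      intro t ht
      set s := Real.exp (-t) with hs
      have hs0 : 0 < s := Real.exp_pos _
      have hs1 : s ≤ 1 := Real.exp_le_one_iff.2 (by linarith)
      have hsmem : s ∈ Set.Icc (0:ℝ) 1 := ⟨hs0.le, hs1⟩
      have hψs : ψ s = φ t * s⁻¹ := by
        rw [hψ]
        simp only [if_pos hs0, hs, Real.log_exp, neg_neg, if_pos (Real.exp_pos (-t))]
      have hφt : φ t = s * ψ s := by
        rw [hψs]
        field_simp
      have := hp s hsmem
      calc |φ t - s * Polynomial.eval s p| = |s * (ψ s - Polynomial.eval s p)| := by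
            rw [hφt]; ring_nf
        _ = s * |ψ s - Polynomial.eval s p| := by
            rw [abs_mul, abs_of_pos hs0]
        _ ≤ s * η := by
            apply mul_le_mul_of_nonneg_left _ hs0.le
            rw [abs_sub_comm]
            exact (hp s hsmem).le
        _ = η * s := by ring
    -- conclude
    have hdiffint : IntegrableOn (fun t => φ t * gf P S (β := β) t -
        Real.exp (-t) * Polynomial.eval (Real.exp (-t)) p * gf P S (β := β) t)
        (Set.Ioi (0:ℝ)) := hφgint.sub (hpoly p).1
    have heq : (∫ t in Set.Ioi (0:ℝ), φ t * gf P S (β := β) t)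
        = ∫ t in Set.Ioi (0:ℝ), (φ t * gf P S (β := β) t -
          Real.exp (-t) * Polynomial.eval (Real.exp (-t)) p * gf P S (β := β) t) := by
      rw [integral_sub hφgint (hpoly p).1, (hpoly p).2, sub_zero]
    rw [heq]
    calc |∫ t in Set.Ioi (0:ℝ), (φ t * gf P S (β := β) t -
          Real.exp (-t) * Polynomial.eval (Real.exp (-t)) p * gf P S (β := β) t)|
        ≤ ∫ t in Set.Ioi (0:ℝ), |φ t * gf P S (β := β) t -
          Real.exp (-t) * Polynomial.eval (Real.exp (-t)) p * gf P S (β := β) t| := by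
          have := norm_integral_le_integral_norm (μ := volume.restrict (Set.Ioi (0:ℝ)))
            (f := fun t => φ t * gf P S (β := β) t -
              Real.exp (-t) * Polynomial.eval (Real.exp (-t)) p * gf P S (β := β) t)
          simpa [Real.norm_eq_abs] using this
      _ ≤ ∫ t in Set.Ioi (0:ℝ), η * (Real.exp (-t) * |gf P S (β := β) t|) := by
          refine setIntegral_mono_on hdiffint.abs (hCint.const_mul η)
            measurableSet_Ioi fun t ht => ?_
          have h1 : φ t * gf P S (β := β) t -
              Real.exp (-t) * Polynomial.eval (Real.exp (-t)) p * gf P S (β := β) t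
                = (φ t - Real.exp (-t) * Polynomial.eval (Real.exp (-t)) p) *
                  gf P S (β := β) t := by ring
          rw [h1, abs_mul]
          calc |φ t - Real.exp (-t) * Polynomial.eval (Real.exp (-t)) p| *
              |gf P S (β := β) t|
              ≤ (η * Real.exp (-t)) * |gf P S (β := β) t| :=
                mul_le_mul_of_nonneg_right (hptw t ht) (abs_nonneg _)
            _ = η * (Real.exp (-t) * |gf P S (β := β) t|) := by ring
      _ = η * C := integral_const_mul η _
  -- finish: the absolute value is smaller than every positive number
  by_contra hne
  have habs : 0 < |∫ t in Set.Ioi (0:ℝ), φ t * gf P S (β := β) t| :=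
    abs_pos.2 hne
  rcases eq_or_lt_of_le hCnn with hC0 | hC0
  · have := hmain 1 one_pos
    rw [← hC0, mul_zero] at this
    linarith
  · set I := |∫ t in Set.Ioi (0:ℝ), φ t * gf P S (β := β) t| with hI
    have := hmain (I / (2 * C)) (by positivity)
    have h2 : I / (2 * C) * C = I / 2 := by field_simp
    rw [h2] at this
    linarith

lemma gf_ae_zero (hS : IsStableSubordinator β P S) (hβ0 : 0 < β) (hβ1 : β ≤ 1) :
    ∀ᵐ t : ℝ, t ∈ Set.Ioi (0 : ℝ) → gf P S (β := β) t = 0 := by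
  have hgm : Measurable (gf P S (β := β)) :=
    (Dr_meas P S hS).sub
      (measurable_const.mul (Real.continuous_rpow_const hβ0.le).measurable)
  have hloc : LocallyIntegrable (gf P S (β := β)) volume := by
    rw [locallyIntegrable_iff]
    intro K hK
    have hbd : Continuous fun t : ℝ =>
        Real.exp (t/2) * 2 + (Real.Gamma (β + 1))⁻¹ * |t| ^ β := by
      apply Continuous.add
      · exact (Real.continuous_exp.comp (continuous_id.div_const 2)).mul continuous_const
      · exact continuous_const.mul
          (continuous_abs.rpow_const fun x => Or.inr hβ0.le)
    refine Integrable.mono' (hbd.continuousOn.integrableOn_compact hK)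
      hgm.aestronglyMeasurable
      (ae_restrict_of_forall_mem hK.measurableSet fun t _ => ?_)
    rw [Real.norm_eq_abs]
    have h1 : |Dr P S t| ≤ Real.exp (t/2) * 2 := by
      rw [abs_of_nonneg (Dr_nonneg P S t)]
      exact Dr_le P S hS hβ1 t
    have h2 : |(Real.Gamma (β + 1))⁻¹ * t ^ β| ≤ (Real.Gamma (β + 1))⁻¹ * |t| ^ β := by
      rw [abs_mul]
      have hG : (0:ℝ) < Real.Gamma (β + 1) := Real.Gamma_pos_of_pos (by linarith)
      rw [abs_of_pos (inv_pos.2 hG)]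
      exact mul_le_mul_of_nonneg_left (Real.abs_rpow_le_abs_rpow t β) (by positivity)
    calc |gf P S (β := β) t| ≤ |Dr P S t| + |(Real.Gamma (β + 1))⁻¹ * t ^ β| :=
          abs_sub _ _
      _ ≤ Real.exp (t/2) * 2 + (Real.Gamma (β + 1))⁻¹ * |t| ^ β := add_le_add h1 h2
  apply isOpen_Ioi.ae_eq_zero_of_integral_contDiff_smul_eq_zero
    (hloc.locallyIntegrableOn _)
  intro ψ hψd hψc hψsupp
  have h1 : (∫ x, ψ x • gf P S (β := β) x)
      = ∫ x in Set.Ioi (0:ℝ), ψ x • gf P S (β := β) x :=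
    (setIntegral_eq_integral_of_forall_compl_eq_zero (fun x hx => by
      rw [image_eq_zero_of_notMem_tsupport (fun hmem => hx (hψsupp hmem)), zero_smul])).symm
  rw [h1]
  have h2 : ∀ t ∈ Set.Ioi (0:ℝ), ψ t • gf P S (β := β) t = ψ t * gf P S (β := β) t :=
    fun t _ => smul_eq_mul ..
  rw [setIntegral_congr_fun measurableSet_Ioi h2]
  exact test_zero P S hS hβ0 hβ1 ψ hψd.continuous hψc

/-! ### Pathwise lemmas -/

def GoodSet : Set Ω := {ω | ∀ n : ℕ, ∃ m : ℕ, (n : ℝ) ≤ S ω m}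

lemma goodSet_meas (hS : IsStableSubordinator β P S) : MeasurableSet (GoodSet S) := by
  have : GoodSet S = ⋂ n : ℕ, ⋃ m : ℕ, {ω : Ω | (n : ℝ) ≤ S ω m} := by
    ext ω; simp [GoodSet]
  rw [this]
  exact MeasurableSet.iInter fun n => MeasurableSet.iUnion fun m =>
    (hS.meas m) measurableSet_Ici

lemma goodSet_ae (hS : IsStableSubordinator β P S) (hβ1 : β ≤ 1) :
    P (GoodSet S)ᶜ = 0 := by
  have hcompl : (GoodSet S)ᶜ = ⋃ n : ℕ, ⋂ m : ℕ, {ω : Ω | S ω m < (n : ℝ)} := by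
    ext ω; simp [GoodSet, not_le]
  rw [hcompl]
  refine measure_iUnion_null fun n => ?_
  have hb : ∀ m : ℕ, P (⋂ m' : ℕ, {ω : Ω | S ω m' < (n : ℝ)})
      ≤ ENNReal.ofReal (Real.exp ((n:ℝ)/2) * Real.exp (-((m:ℝ)/2))) := by
    intro m
    calc P (⋂ m' : ℕ, {ω : Ω | S ω m' < (n : ℝ)}) ≤ P {ω : Ω | S ω m < (n : ℝ)} :=
          measure_mono (Set.iInter_subset _ m)
    _ ≤ _ := pf_le P S hS hβ1 (Nat.cast_nonneg m) (n : ℝ)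
  have hlim : Tendsto (fun m : ℕ => ENNReal.ofReal
      (Real.exp ((n:ℝ)/2) * Real.exp (-((m:ℝ)/2)))) atTop (nhds 0) := by
    have h1 : Tendsto (fun m : ℕ => (m:ℝ)/2) atTop atTop :=
      (tendsto_natCast_atTop_atTop).atTop_div_const two_pos
    have h2 : Tendsto (fun m : ℕ => Real.exp (-((m:ℝ)/2))) atTop (nhds 0) :=
      Real.tendsto_exp_atBot.comp (tendsto_neg_atTop_atBot.comp h1)
    have h3 : Tendsto (fun m : ℕ => Real.exp ((n:ℝ)/2) * Real.exp (-((m:ℝ)/2))) atTop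
        (nhds (Real.exp ((n:ℝ)/2) * 0)) := h2.const_mul _
    rw [mul_zero] at h3
    have := ENNReal.tendsto_ofReal h3
    rwa [ENNReal.ofReal_zero] at this
  have := ge_of_tendsto' hlim hb
  exact nonpos_iff_eq_zero.1 this

lemma good_of_mem {ω : Ω} (hω : ω ∈ GoodSet S) (t : ℝ) :
    ∃ u : ℝ, 0 ≤ u ∧ t ≤ S ω u := by
  obtain ⟨n, hn⟩ := exists_nat_ge t
  obtain ⟨m, hm⟩ := hω n
  exact ⟨m, Nat.cast_nonneg m, le_trans hn hm⟩

lemma good_nonempty (hS : IsStableSubordinator β P S) {ω : Ω} (hω : ω ∈ GoodSet S) (t : ℝ) :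
    {u : ℝ | 0 ≤ u ∧ t ≤ S ω u}.Nonempty := by
  obtain ⟨u, hu1, hu2⟩ := good_of_mem S hω t
  exact ⟨u, hu1, hu2⟩

lemma invProc_nonneg (hS : IsStableSubordinator β P S) {ω : Ω} (hω : ω ∈ GoodSet S) (t : ℝ) :
    0 ≤ invProc S ω t :=
  le_csInf (good_nonempty P S hS hω t) fun b hb => hb.1

lemma invProc_attains (hS : IsStableSubordinator β P S) {ω : Ω} (hω : ω ∈ GoodSet S) (t : ℝ) :
    t ≤ S ω (invProc S ω t) := by
  set A := {u : ℝ | 0 ≤ u ∧ t ≤ S ω u} with hA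
  have hne : A.Nonempty := good_nonempty P S hS hω t
  have hbdd : BddBelow A := ⟨0, fun u hu => hu.1⟩
  set M := sInf A with hM
  by_contra hlt
  push_neg at hlt
  have hrc := hS.rightCont ω M
  have hev : (S ω) ⁻¹' Set.Iio t ∈ nhdsWithin M (Set.Ici M) :=
    hrc (Iio_mem_nhds hlt)
  rw [Metric.mem_nhdsWithin_iff] at hev
  obtain ⟨δ, hδ, hball⟩ := hev
  obtain ⟨v, hvA, hv⟩ := Real.lt_sInf_add_pos hne hδ
  have hvM : M ≤ v := csInf_le hbdd hvA
  have hvball : v ∈ Metric.ball M δ ∩ Set.Ici M := by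
    constructor
    · rw [Metric.mem_ball, Real.dist_eq, abs_of_nonneg (by linarith)]
      linarith
    · exact hvM
  have := hball hvball
  rw [Set.mem_preimage, Set.mem_Iio] at this
  exact absurd hvA.2 (not_le.2 this)

lemma invProc_zero_of (hS : IsStableSubordinator β P S) (ω : Ω) : invProc S ω 0 = 0 := by
  have h0 : (0:ℝ) ∈ {u : ℝ | 0 ≤ u ∧ (0:ℝ) ≤ S ω u} := ⟨le_rfl, by rw [hS.zero ω]⟩
  exact le_antisymm (csInf_le ⟨0, fun u hu => hu.1⟩ h0)
    (le_csInf ⟨0, h0⟩ fun b hb => hb.1)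

lemma Ico_subset (hS : IsStableSubordinator β P S) {ω : Ω} (hω : ω ∈ GoodSet S) (a b : ℝ) :
    Set.Ico (invProc S ω a) (invProc S ω b) ⊆ {u : ℝ | a ≤ S ω u ∧ S ω u < b} := by
  intro u hu
  constructor
  · exact le_trans (invProc_attains P S hS hω a) (hS.mono ω hu.1)
  · by_contra hge
    push_neg at hge
    have humem : u ∈ {u : ℝ | 0 ≤ u ∧ b ≤ S ω u} :=
      ⟨le_trans (invProc_nonneg P S hS hω a) hu.1, hge⟩
    have := csInf_le (⟨0, fun w hw => hw.1⟩ : BddBelow {u : ℝ | 0 ≤ u ∧ b ≤ S ω u}) humem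
    exact absurd hu.2 (not_lt.2 this)

/-- Expected occupation of the window `[a, b)` by the subordinator. -/
lemma expected_occupation (hS : IsStableSubordinator β P S) (hβ1 : β ≤ 1)
    {a b : ℝ} (h0a : 0 < a) (hab : a ≤ b) :
    ∫⁻ ω, volume {u : ℝ | a ≤ S ω u ∧ S ω u < b} ∂P = Df P S b - Df P S a := by
  have hsetm : MeasurableSet {p : Ω × ℝ | a ≤ S p.1 p.2 ∧ S p.1 p.2 < b} :=
    (measurableSet_le measurable_const (measS P S hS)).inter
      (measurableSet_lt (measS P S hS) measurable_const)
  have hsecm : ∀ ω : Ω, MeasurableSet {u : ℝ | a ≤ S ω u ∧ S ω u < b} := by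
    intro ω
    have hm : Measurable (S ω) := (hS.mono ω).measurable
    exact (measurableSet_le measurable_const hm).inter (measurableSet_lt hm measurable_const)
  -- step: write as double integral and swap
  have h1 : ∀ ω : Ω, volume {u : ℝ | a ≤ S ω u ∧ S ω u < b}
      = ∫⁻ u, Set.indicator {p : Ω × ℝ | a ≤ S p.1 p.2 ∧ S p.1 p.2 < b}
          (fun _ => (1:ℝ≥0∞)) (ω, u) := by
    intro ω
    rw [← lintegral_indicator_one (hsecm ω)]
    refine lintegral_congr fun u => ?_
    by_cases h : a ≤ S ω u ∧ S ω u < b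
    · rw [Set.indicator_of_mem (show (ω, u) ∈ {p : Ω × ℝ | a ≤ S p.1 p.2 ∧ S p.1 p.2 < b} from h),
        Set.indicator_of_mem (show u ∈ {u : ℝ | a ≤ S ω u ∧ S ω u < b} from h)]
      rfl
    · rw [Set.indicator_of_notMem
          (show (ω, u) ∉ {p : Ω × ℝ | a ≤ S p.1 p.2 ∧ S p.1 p.2 < b} from h),
        Set.indicator_of_notMem (show u ∉ {u : ℝ | a ≤ S ω u ∧ S ω u < b} from h)]
  have hindm : Measurable fun p : Ω × ℝ =>
      Set.indicator {p : Ω × ℝ | a ≤ S p.1 p.2 ∧ S p.1 p.2 < b} (fun _ => (1:ℝ≥0∞)) p :=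
    (measurable_const (a := (1:ℝ≥0∞))).indicator hsetm
  have hswap := lintegral_lintegral_swap (μ := P) (ν := (volume : Measure ℝ))
    (f := fun ω u => Set.indicator {p : Ω × ℝ | a ≤ S p.1 p.2 ∧ S p.1 p.2 < b}
      (fun _ => (1:ℝ≥0∞)) (ω, u)) hindm.aemeasurable
  -- identify the inner integral over ω
  have h2 : ∀ u : ℝ, (∫⁻ ω, Set.indicator {p : Ω × ℝ | a ≤ S p.1 p.2 ∧ S p.1 p.2 < b}
      (fun _ => (1:ℝ≥0∞)) (ω, u) ∂P) = P {ω : Ω | a ≤ S ω u ∧ S ω u < b} := by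
    intro u
    have hsm : MeasurableSet {ω : Ω | a ≤ S ω u ∧ S ω u < b} :=
      (measurableSet_le measurable_const (hS.meas u)).inter
        (measurableSet_lt (hS.meas u) measurable_const)
    rw [← lintegral_indicator_one hsm]
    refine lintegral_congr fun ω => ?_
    by_cases h : a ≤ S ω u ∧ S ω u < b
    · rw [Set.indicator_of_mem (show (ω, u) ∈ _ from h),
        Set.indicator_of_mem (show ω ∈ {ω : Ω | a ≤ S ω u ∧ S ω u < b} from h)]
      rfl
    · rw [Set.indicator_of_notMem (show (ω, u) ∉ _ from h),
        Set.indicator_of_notMem (show ω ∉ {ω : Ω | a ≤ S ω u ∧ S ω u < b} from h)]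
  have hwin : Measurable fun u : ℝ => P {ω : Ω | a ≤ S ω u ∧ S ω u < b} := by
    have hs : MeasurableSet {p : ℝ × Ω | a ≤ S p.2 p.1 ∧ S p.2 p.1 < b} := by
      have hSm : Measurable fun p : ℝ × Ω => S p.2 p.1 :=
        (measS P S hS).comp (measurable_snd.prodMk measurable_fst)
      exact (measurableSet_le measurable_const hSm).inter
        (measurableSet_lt hSm measurable_const)
    exact measurable_measure_prodMk_left hs
  -- the window probability vanishes for `u ≤ 0` and equals a difference for `u > 0`
  have h3 : ∀ u : ℝ, u ≤ 0 → P {ω : Ω | a ≤ S ω u ∧ S ω u < b} = 0 := by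
    intro u hu
    have : {ω : Ω | a ≤ S ω u ∧ S ω u < b} = ∅ := by
      ext ω
      simp only [Set.mem_setOf_eq, Set.mem_empty_iff_false, iff_false, not_and]
      intro h
      exfalso
      have h1 : S ω u ≤ S ω 0 := hS.mono ω hu
      rw [hS.zero ω] at h1
      linarith
    rw [this, measure_empty]
  have h4 : ∀ u : ℝ, P {ω : Ω | a ≤ S ω u ∧ S ω u < b} = pf P S u b - pf P S u a := by
    intro u
    have hset : {ω : Ω | a ≤ S ω u ∧ S ω u < b}
        = {ω : Ω | S ω u < b} \ {ω : Ω | S ω u < a} := by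
      ext ω
      simp only [Set.mem_setOf_eq, Set.mem_diff, not_lt]
      tauto
    rw [hset, pf, pf]
    exact measure_diff (fun ω (hω : S ω u < a) => lt_of_lt_of_le hω hab)
      ((hS.meas u) measurableSet_Iio).nullMeasurableSet (measure_ne_top P _)
  calc ∫⁻ ω, volume {u : ℝ | a ≤ S ω u ∧ S ω u < b} ∂P
      = ∫⁻ ω, (∫⁻ u, Set.indicator {p : Ω × ℝ | a ≤ S p.1 p.2 ∧ S p.1 p.2 < b}
          (fun _ => (1:ℝ≥0∞)) (ω, u)) ∂P := lintegral_congr h1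
    _ = ∫⁻ u, (∫⁻ ω, Set.indicator {p : Ω × ℝ | a ≤ S p.1 p.2 ∧ S p.1 p.2 < b}
          (fun _ => (1:ℝ≥0∞)) (ω, u) ∂P) := hswap
    _ = ∫⁻ u, P {ω : Ω | a ≤ S ω u ∧ S ω u < b} := lintegral_congr h2
    _ = ∫⁻ u in Set.Ioi (0:ℝ), P {ω : Ω | a ≤ S ω u ∧ S ω u < b} := by
        rw [← lintegral_add_compl _ (measurableSet_Ioi (a := (0:ℝ)))]
        have : ∫⁻ u in (Set.Ioi (0:ℝ))ᶜ, P {ω : Ω | a ≤ S ω u ∧ S ω u < b} = 0 := by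
          rw [setLIntegral_congr_fun measurableSet_Ioi.compl
            (fun u hu => h3 u (by
              simpa [Set.mem_compl_iff, Set.mem_Ioi, not_lt] using hu))]
          simp
        rw [this, add_zero]
    _ = ∫⁻ u in Set.Ioi (0:ℝ), (pf P S u b - pf P S u a) := by
        exact setLIntegral_congr_fun measurableSet_Ioi
          (fun u _ => h4 u)
    _ = Df P S b - Df P S a := by
        have hga : Measurable fun u : ℝ => pf P S u a :=
          (pf_meas P S hS).comp (measurable_id.prodMk measurable_const)
        rw [lintegral_sub hga
          (ne_of_lt (lt_of_le_of_lt (Df_le P S hS hβ1 a) ENNReal.ofReal_lt_top))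
          (Filter.Eventually.of_forall fun u => pf_mono P S u hab)]
        rfl

/-- Mean value bound for differences of `rpow`. -/
lemma rpow_sub_le (hβ0 : 0 < β) (hβ1 : β ≤ 1) {s t : ℝ} (h1 : 1 ≤ s) (hst : s < t) :
    t ^ β - s ^ β ≤ β * s ^ (β - 1) * (t - s) := by
  have hs0 : (0:ℝ) < s := lt_of_lt_of_le one_pos h1
  have hcont : ContinuousOn (fun y : ℝ => y ^ β) (Set.Icc s t) := by
    refine continuousOn_id.rpow_const fun y hy => Or.inl ?_
    have : (0:ℝ) < y := lt_of_lt_of_le hs0 hy.1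
    exact this.ne'
  have hderiv : ∀ y ∈ Set.Ioo s t, HasDerivAt (fun y : ℝ => y ^ β) (β * y ^ (β - 1)) y := by
    intro y hy
    have hy0 : (0:ℝ) < y := lt_trans hs0 hy.1
    have := Real.hasDerivAt_rpow_const (x := y) (p := β) (Or.inl hy0.ne')
    exact this
  obtain ⟨x, hx, hslope⟩ := exists_hasDerivAt_eq_slope (fun y : ℝ => y ^ β)
    (fun y => β * y ^ (β - 1)) hst hcont hderiv
  have hx0 : (0:ℝ) < x := lt_trans hs0 hx.1
  have hxs : x ^ (β - 1) ≤ s ^ (β - 1) :=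
    Real.rpow_le_rpow_of_nonpos hs0 hx.1.le (by linarith)
  have h2 : (t ^ β - s ^ β) / (t - s) ≤ β * s ^ (β - 1) := by
    rw [← hslope]
    exact mul_le_mul_of_nonneg_left hxs hβ0.le
  have hts : (0:ℝ) < t - s := by linarith
  calc t ^ β - s ^ β = (t ^ β - s ^ β) / (t - s) * (t - s) := by field_simp
  _ ≤ β * s ^ (β - 1) * (t - s) := mul_le_mul_of_nonneg_right h2 hts.le

end MLaux

/-- The mixing property of the increments of the β-Mittag-Leffler fractional
SαS motion: for every `ε > 0`,
`(P' × ν){ (ω,x) : M_β((1-x)_+) > ε, M_β((n+1-x)_+) - M_β((n-x)_+) > ε } → 0`. -/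
theorem mittagLeffler_increments_mixing_condition
    {Ω : Type*} [MeasurableSpace Ω] (P : Measure Ω) [IsProbabilityMeasure P]
    (β : ℝ) (hβ0 : 0 < β) (hβ1 : β < 1)
    (S : Ω → ℝ → ℝ) (hS : IsStableSubordinator β P S)
    (ε : ℝ) (hε : 0 < ε) :
    Tendsto
      (fun n : ℕ =>
        (P.prod (nuMeasure β))
          {q : Ω × ℝ |
            ε < invProc S q.1 (max (1 - q.2) 0) ∧
            ε < invProc S q.1 (max ((n : ℝ) + 1 - q.2) 0)
                  - invProc S q.1 (max ((n : ℝ) - q.2) 0)})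
      atTop (nhds 0) := by
  classical
  have hβ1' : β ≤ 1 := hβ1.le
  set ν : Measure ℝ := nuMeasure β with hν
  set μ : Measure (Ω × ℝ) := P.prod ν with hμ
  set A : ℕ → Set (Ω × ℝ) := fun n =>
    {q : Ω × ℝ |
      ε < invProc S q.1 (max (1 - q.2) 0) ∧
      ε < invProc S q.1 (max ((n : ℝ) + 1 - q.2) 0)
            - invProc S q.1 (max ((n : ℝ) - q.2) 0)} with hA
  -- finiteness of ν [0,1)
  have hK : ν (Set.Ico (0:ℝ) 1) ≠ ∞ := by
    rw [hν, nuMeasure, withDensity_apply _ measurableSet_Ico,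
      Measure.restrict_restrict measurableSet_Ico]
    have h1 : Set.Ico (0:ℝ) 1 ∩ Set.Ici 0 = Set.Ico 0 1 :=
      Set.inter_eq_left.2 fun x hx => hx.1
    rw [h1]
    have h2 : (∫⁻ x in Set.Ico (0:ℝ) 1, ENNReal.ofReal ((1 - β) * x ^ (-β)))
        = ∫⁻ x in Set.Ioo (0:ℝ) 1, ENNReal.ofReal ((1 - β) * x ^ (-β)) :=
      (setLIntegral_congr (MeasureTheory.Ioo_ae_eq_Ico (μ := volume) (a := (0:ℝ)) (b := 1))).symm
    rw [h2]
    have hint : IntegrableOn (fun x : ℝ => (1 - β) * x ^ (-β)) (Set.Ioo 0 1) := by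
      have h3 : IntervalIntegrable (fun x : ℝ => x ^ (-β)) volume 0 1 :=
        intervalIntegral.intervalIntegrable_rpow' (by linarith)
      have h4 : IntegrableOn (fun x : ℝ => x ^ (-β)) (Set.Ioo 0 1) :=
        (intervalIntegrable_iff_integrableOn_Ioo_of_le (by norm_num : (0:ℝ) ≤ 1)).1 h3
      exact h4.const_mul _
    exact (Integrable.lintegral_lt_top hint).ne
  -- ν gives no mass to negatives
  have hνneg : ν (Set.Iio (0:ℝ)) = 0 := by
    rw [hν, nuMeasure, withDensity_apply _ measurableSet_Iio,
      Measure.restrict_restrict measurableSet_Iio, Set.Iio_inter_Ici, Set.Ico_self,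
      Measure.restrict_empty]
    simp
  haveI hνsf : SFinite ν := by rw [hν, nuMeasure]; infer_instance
  -- the occupation functional
  set F : ℕ → Ω × ℝ → ℝ≥0∞ := fun n q =>
    volume {u : ℝ | (n:ℝ) - q.2 ≤ S q.1 u ∧ S q.1 u < (n:ℝ) + 1 - q.2} with hF
  have hFmeas : ∀ n : ℕ, Measurable (F n) := by
    intro n
    have hSm : Measurable fun p : (Ω × ℝ) × ℝ => S p.1.1 p.2 :=
      (MLaux.measS P S hS).comp ((measurable_fst.comp measurable_fst).prodMk measurable_snd)
    have hx : Measurable fun p : (Ω × ℝ) × ℝ => p.1.2 := measurable_snd.comp measurable_fst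
    have hs : MeasurableSet {p : (Ω × ℝ) × ℝ |
        (n:ℝ) - p.1.2 ≤ S p.1.1 p.2 ∧ S p.1.1 p.2 < (n:ℝ) + 1 - p.1.2} :=
      (measurableSet_le (measurable_const.sub hx) hSm).inter
        (measurableSet_lt hSm (measurable_const.sub hx))
    exact measurable_measure_prodMk_left hs
  -- inclusion into a measurable superset
  have hincl : ∀ n : ℕ, 2 ≤ n → A n ⊆
      ((MLaux.GoodSet S)ᶜ ×ˢ Set.univ ∪ Set.univ ×ˢ Set.Iio (0:ℝ)) ∪
        {q : Ω × ℝ | q.2 ∈ Set.Ico (0:ℝ) 1 ∧ ENNReal.ofReal ε ≤ F n q} := by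
    intro n hn q hq
    obtain ⟨h1, h2⟩ := hq
    have hn2 : (2:ℝ) ≤ (n:ℝ) := by exact_mod_cast hn
    by_cases hgood : q.1 ∈ MLaux.GoodSet S
    swap
    · exact Or.inl (Or.inl ⟨hgood, Set.mem_univ _⟩)
    by_cases hx0 : q.2 < 0
    · exact Or.inl (Or.inr ⟨Set.mem_univ _, hx0⟩)
    push_neg at hx0
    right
    have hx1 : q.2 < 1 := by
      by_contra hge
      push_neg at hge
      rw [max_eq_right (by linarith : 1 - q.2 ≤ 0), MLaux.invProc_zero_of P S hS q.1] at h1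
      exact absurd h1 (not_lt.2 hε.le)
    have hmax1 : max ((n:ℝ) - q.2) 0 = (n:ℝ) - q.2 := max_eq_left (by linarith)
    have hmax2 : max ((n:ℝ) + 1 - q.2) 0 = (n:ℝ) + 1 - q.2 := max_eq_left (by linarith)
    rw [hmax1, hmax2] at h2
    have hsub := MLaux.Ico_subset P S hS hgood ((n:ℝ) - q.2) ((n:ℝ) + 1 - q.2)
    have hvol : ENNReal.ofReal ε ≤ F n q := by
      calc ENNReal.ofReal ε
          ≤ ENNReal.ofReal (invProc S q.1 ((n:ℝ) + 1 - q.2)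
              - invProc S q.1 ((n:ℝ) - q.2)) := ENNReal.ofReal_le_ofReal h2.le
        _ = volume (Set.Ico (invProc S q.1 ((n:ℝ) - q.2))
              (invProc S q.1 ((n:ℝ) + 1 - q.2))) := (Real.volume_Ico).symm
        _ ≤ F n q := measure_mono hsub
    exact ⟨⟨hx0, hx1⟩, hvol⟩
  -- the quantitative bound
  have hbound : ∀ n : ℕ, 2 ≤ n → μ (A n) ≤
      (MLaux.Df P S ((n:ℝ) + 1) - MLaux.Df P S ((n:ℝ) - 1)) * ν (Set.Ico (0:ℝ) 1)
        / ENNReal.ofReal ε := by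
    intro n hn
    have hn2 : (2:ℝ) ≤ (n:ℝ) := by exact_mod_cast hn
    refine le_trans (measure_mono (hincl n hn)) ?_
    refine le_trans (measure_union_le _ _) ?_
    have hz : μ ((MLaux.GoodSet S)ᶜ ×ˢ Set.univ ∪ Set.univ ×ˢ Set.Iio (0:ℝ)) = 0 := by
      refine measure_union_null ?_ ?_
      · rw [hμ, Measure.prod_prod, MLaux.goodSet_ae P S hS hβ1', zero_mul]
      · rw [hμ, Measure.prod_prod, hνneg, mul_zero]
    rw [hz, zero_add]
    -- Markov inequality on the restricted product measure
    have hgem : MeasurableSet {q : Ω × ℝ | ENNReal.ofReal ε ≤ F n q} :=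
      (hFmeas n) measurableSet_Ici
    have hBsub : {q : Ω × ℝ | q.2 ∈ Set.Ico (0:ℝ) 1 ∧ ENNReal.ofReal ε ≤ F n q}
        = {q : Ω × ℝ | ENNReal.ofReal ε ≤ F n q} ∩ (Set.univ ×ˢ Set.Ico (0:ℝ) 1) := by
      ext q
      simp only [Set.mem_setOf_eq, Set.mem_inter_iff, Set.mem_prod, Set.mem_univ, true_and]
      tauto
    rw [hBsub, ← Measure.restrict_apply hgem]
    have hres : μ.restrict (Set.univ ×ˢ Set.Ico (0:ℝ) 1)
        = P.prod (ν.restrict (Set.Ico (0:ℝ) 1)) := by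
      rw [hμ, ← Measure.prod_restrict, Measure.restrict_univ]
    rw [hres]
    refine le_trans (meas_ge_le_lintegral_div (hFmeas n).aemeasurable
      (by simp [ENNReal.ofReal_eq_zero, not_le, hε] : ENNReal.ofReal ε ≠ 0)
      ENNReal.ofReal_ne_top) ?_
    apply ENNReal.div_le_div_right
    rw [lintegral_prod_symm _ (hFmeas n).aemeasurable]
    have hinner : ∀ x ∈ Set.Ico (0:ℝ) 1, (∫⁻ ω, F n (ω, x) ∂P)
        ≤ MLaux.Df P S ((n:ℝ) + 1) - MLaux.Df P S ((n:ℝ) - 1) := by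
      intro x hx
      have hocc := MLaux.expected_occupation P S hS hβ1'
        (show (0:ℝ) < (n:ℝ) - x by linarith [hx.2])
        (show (n:ℝ) - x ≤ (n:ℝ) + 1 - x by linarith)
      calc (∫⁻ ω, F n (ω, x) ∂P)
          = MLaux.Df P S ((n:ℝ) + 1 - x) - MLaux.Df P S ((n:ℝ) - x) := hocc
        _ ≤ MLaux.Df P S ((n:ℝ) + 1) - MLaux.Df P S ((n:ℝ) - 1) :=
            tsub_le_tsub (MLaux.Df_mono P S (by linarith [hx.1] : (n:ℝ) + 1 - x ≤ (n:ℝ) + 1))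
              (MLaux.Df_mono P S (by linarith [hx.2] : (n:ℝ) - 1 ≤ (n:ℝ) - x))
    calc (∫⁻ x, ∫⁻ ω, F n (ω, x) ∂P ∂ν.restrict (Set.Ico (0:ℝ) 1))
        ≤ ∫⁻ _ in Set.Ico (0:ℝ) 1,
            (MLaux.Df P S ((n:ℝ) + 1) - MLaux.Df P S ((n:ℝ) - 1)) ∂ν := by
          refine lintegral_mono_ae ?_
          filter_upwards [ae_restrict_mem measurableSet_Ico] with x hx
          exact hinner x hx
      _ = (MLaux.Df P S ((n:ℝ) + 1) - MLaux.Df P S ((n:ℝ) - 1)) * ν (Set.Ico (0:ℝ) 1) := by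
          rw [lintegral_const, Measure.restrict_apply_univ]
  -- identification of Df
  set c0 : ℝ := (Real.Gamma (β + 1))⁻¹ with hc0
  have hc0nn : 0 ≤ c0 := inv_nonneg.2 (Real.Gamma_pos_of_pos (by linarith)).le
  have hDfeq : ∀ᵐ t : ℝ, t ∈ Set.Ioi (0:ℝ) →
      MLaux.Df P S t = ENNReal.ofReal (c0 * t ^ β) := by
    filter_upwards [MLaux.gf_ae_zero P S hS hβ0 hβ1'] with t ht ht0
    have h1 : MLaux.Dr P S t = c0 * t ^ β := by
      have := ht ht0
      rw [MLaux.gf, sub_eq_zero] at this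
      exact this
    rw [← h1, MLaux.Dr, ENNReal.ofReal_toReal (MLaux.Df_ne_top P S hS hβ1' t)]
  have hpick : ∀ B C : ℝ, 0 < B → B < C → ∃ t, t ∈ Set.Ioo B C ∧
      MLaux.Df P S t = ENNReal.ofReal (c0 * t ^ β) := by
    intro B C hB hBC
    by_contra h
    push_neg at h
    have hsub : Set.Ioo B C ⊆
        {t : ℝ | ¬(t ∈ Set.Ioi (0:ℝ) → MLaux.Df P S t = ENNReal.ofReal (c0 * t ^ β))} := by
      intro t ht
      simp only [Set.mem_setOf_eq, not_forall]
      exact ⟨lt_trans hB ht.1, h t ht⟩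
    have hnull : volume {t : ℝ | ¬(t ∈ Set.Ioi (0:ℝ) →
        MLaux.Df P S t = ENNReal.ofReal (c0 * t ^ β))} = 0 := hDfeq
    have := measure_mono_null hsub hnull
    rw [Real.volume_Ioo] at this
    exact absurd this (by simp [hBC])
  -- the decay bound for the increments of Df
  have hdecay : ∀ n : ℕ, 3 ≤ n →
      MLaux.Df P S ((n:ℝ) + 1) - MLaux.Df P S ((n:ℝ) - 1)
        ≤ ENNReal.ofReal (c0 * (β * ((n:ℝ) - 2) ^ (β - 1) * 4)) := by
    intro n hn
    have hn3 : (3:ℝ) ≤ (n:ℝ) := by exact_mod_cast hn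
    obtain ⟨t₁, ht₁, hDt₁⟩ := hpick ((n:ℝ) - 2) ((n:ℝ) - 1) (by linarith) (by linarith)
    obtain ⟨t₂, ht₂, hDt₂⟩ := hpick ((n:ℝ) + 1) ((n:ℝ) + 2) (by linarith) (by linarith)
    have ht₁pos : (1:ℝ) ≤ t₁ := by linarith [ht₁.1]
    have ht12 : t₁ < t₂ := by linarith [ht₁.2, ht₂.1]
    have hrpow : t₂ ^ β - t₁ ^ β ≤ β * ((n:ℝ) - 2) ^ (β - 1) * 4 := by
      have h1 := MLaux.rpow_sub_le hβ0 hβ1' ht₁pos ht12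
      have h2 : t₁ ^ (β - 1) ≤ ((n:ℝ) - 2) ^ (β - 1) :=
        Real.rpow_le_rpow_of_nonpos (by linarith) ht₁.1.le (by linarith)
      have h3 : t₂ - t₁ ≤ 4 := by linarith [ht₁.1, ht₂.2]
      have h4 : (0:ℝ) ≤ β * t₁ ^ (β - 1) :=
        mul_nonneg hβ0.le (Real.rpow_nonneg (by linarith) _)
      calc t₂ ^ β - t₁ ^ β ≤ β * t₁ ^ (β - 1) * (t₂ - t₁) := h1
        _ ≤ β * ((n:ℝ) - 2) ^ (β - 1) * 4 := by
            apply mul_le_mul (mul_le_mul_of_nonneg_left h2 hβ0.le) h3 (by linarith) ?_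
            exact mul_nonneg hβ0.le (Real.rpow_nonneg (by linarith) _)
    calc MLaux.Df P S ((n:ℝ) + 1) - MLaux.Df P S ((n:ℝ) - 1)
        ≤ MLaux.Df P S t₂ - MLaux.Df P S t₁ :=
          tsub_le_tsub (MLaux.Df_mono P S ht₂.1.le) (MLaux.Df_mono P S ht₁.2.le)
      _ = ENNReal.ofReal (c0 * t₂ ^ β) - ENNReal.ofReal (c0 * t₁ ^ β) := by
          rw [hDt₂, hDt₁]
      _ = ENNReal.ofReal (c0 * t₂ ^ β - c0 * t₁ ^ β) := by
          rw [ENNReal.ofReal_sub _ (mul_nonneg hc0nn (Real.rpow_nonneg (by linarith) _))]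
      _ ≤ ENNReal.ofReal (c0 * (β * ((n:ℝ) - 2) ^ (β - 1) * 4)) := by
          apply ENNReal.ofReal_le_ofReal
          calc c0 * t₂ ^ β - c0 * t₁ ^ β = c0 * (t₂ ^ β - t₁ ^ β) := by ring
            _ ≤ c0 * (β * ((n:ℝ) - 2) ^ (β - 1) * 4) :=
              mul_le_mul_of_nonneg_left hrpow hc0nn
  -- the vanishing upper bound
  set bnd : ℕ → ℝ≥0∞ := fun n =>
    ENNReal.ofReal (c0 * (β * ((n:ℝ) - 2) ^ (β - 1) * 4)) *
      (ν (Set.Ico (0:ℝ) 1) / ENNReal.ofReal ε) with hbnd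
  have hbndlim : Tendsto bnd atTop (nhds 0) := by
    have h1 : Tendsto (fun n : ℕ => ((n:ℝ) - 2) ^ (β - 1)) atTop (nhds 0) := by
      have h2 : Tendsto (fun n : ℕ => ((n:ℝ) - 2)) atTop atTop :=
        tendsto_atTop_add_const_right atTop (-2) tendsto_natCast_atTop_atTop
      have h3 := (tendsto_rpow_neg_atTop (by linarith : (0:ℝ) < 1 - β)).comp h2
      have h4 : (fun n : ℕ => ((n:ℝ) - 2) ^ (-(1 - β))) = fun n : ℕ => ((n:ℝ) - 2) ^ (β - 1) := by
        funext n; congr 1; ring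
      rwa [← h4]
    have h5 : Tendsto (fun n : ℕ => c0 * (β * ((n:ℝ) - 2) ^ (β - 1) * 4)) atTop (nhds 0) := by
      have := ((h1.const_mul β).mul_const 4).const_mul c0
      simpa using this
    have h6 : Tendsto (fun n : ℕ =>
        ENNReal.ofReal (c0 * (β * ((n:ℝ) - 2) ^ (β - 1) * 4))) atTop (nhds 0) := by
      have := ENNReal.tendsto_ofReal h5
      rwa [ENNReal.ofReal_zero] at this
    have h7 : ν (Set.Ico (0:ℝ) 1) / ENNReal.ofReal ε ≠ ∞ :=
      (ENNReal.div_lt_top hK (by simp [ENNReal.ofReal_eq_zero, not_le, hε])).ne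
    have h8 := ENNReal.Tendsto.mul_const h6 (Or.inr h7)
    rwa [zero_mul] at h8
  -- final squeeze
  refine tendsto_of_tendsto_of_tendsto_of_le_of_le' tendsto_const_nhds hbndlim
    (Filter.Eventually.of_forall fun n => zero_le) ?_
  filter_upwards [Filter.eventually_ge_atTop 3] with n hn
  calc μ (A n) ≤ (MLaux.Df P S ((n:ℝ) + 1) - MLaux.Df P S ((n:ℝ) - 1)) *
        ν (Set.Ico (0:ℝ) 1) / ENNReal.ofReal ε := hbound n (by omega)
    _ ≤ bnd n := by
        rw [hbnd, ENNReal.div_eq_inv_mul, ENNReal.div_eq_inv_mul]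
        calc (ENNReal.ofReal ε)⁻¹ * ((MLaux.Df P S ((n:ℝ) + 1) -
              MLaux.Df P S ((n:ℝ) - 1)) * ν (Set.Ico (0:ℝ) 1))
            ≤ (ENNReal.ofReal ε)⁻¹ * (ENNReal.ofReal
                (c0 * (β * ((n:ℝ) - 2) ^ (β - 1) * 4)) * ν (Set.Ico (0:ℝ) 1)) :=
              mul_le_mul_right (mul_le_mul_left (hdecay n hn) _) _
          _ = ENNReal.ofReal (c0 * (β * ((n:ℝ) - 2) ^ (β - 1) * 4)) *
              ((ENNReal.ofReal ε)⁻¹ * ν (Set.Ico (0:ℝ) 1)) := by ring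
          _ = _ := rfl
end

section
/- For every β∈(0,1), the series Σ_{m=1}^∞ ( Γ(1+mβ) / m! )^{1/(2m)} diverges to infinity. -/
open Filter

lemma gamma_ge_half {x : ℝ} (hx : 1 ≤ x) : (1:ℝ)/2 ≤ Real.Gamma x := by
  have hmono := Real.Gamma_strictMonoOn_Ici.monotoneOn
  have hG2 : Real.Gamma 2 = 1 := by
    simpa using Real.Gamma_nat_eq_factorial 1
  rcases le_or_gt 2 x with h2 | h2
  · have : Real.Gamma 2 ≤ Real.Gamma x := hmono (by norm_num) h2 h2
    linarith
  · have hx0 : (0:ℝ) < x := by linarith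
    have hadd : Real.Gamma (x + 1) = x * Real.Gamma x := Real.Gamma_add_one (ne_of_gt hx0)
    have h1 : Real.Gamma 2 ≤ Real.Gamma (x + 1) := hmono (by norm_num) (by simp; linarith) (by linarith)
    have hGpos : 0 < Real.Gamma x := Real.Gamma_pos_of_pos hx0
    nlinarith

lemma factorial_le_pow (m : ℕ) (hm : 1 ≤ m) :
    ((Nat.factorial m : ℝ)) ≤ ((2*m : ℝ)) ^ (2*m) / 2 := by
  have h1 : (Nat.factorial m : ℝ) ≤ (m:ℝ) ^ m := by
    exact_mod_cast Nat.factorial_le_pow m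
  have hm1 : (1:ℝ) ≤ (m:ℝ) := by exact_mod_cast hm
  have h2 : (m:ℝ) ^ m ≤ (2*m:ℝ) ^ m := by
    apply pow_le_pow_left₀ (by positivity)
    linarith
  have h3 : (2*m:ℝ) ^ m * 2 ≤ (2*m:ℝ) ^ (2*m) := by
    rw [two_mul m, pow_add]
    have h4 : (2:ℝ) ≤ (2*m:ℝ) ^ m := by
      calc (2:ℝ) = 2^1 := by norm_num
      _ ≤ (2:ℝ)^m := by exact pow_le_pow_right₀ (by norm_num) hm
      _ ≤ (2*m:ℝ)^m := by apply pow_le_pow_left₀ (by norm_num); linarith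
    nlinarith [pow_pos (show (0:ℝ) < 2*m by positivity) m]
  linarith

/-- Carleman's condition for the Mittag-Leffler distribution: for every
`β ∈ (0,1)`, the series `Σ_m (Γ(1+mβ)/m!)^{1/(2m)}` diverges to infinity. -/
theorem carleman_mittagLeffler (β : ℝ) (hβ0 : 0 < β) (hβ1 : β < 1) :
    Tendsto
      (fun N : ℕ => ∑ m ∈ Finset.Icc 1 N,
        (Real.Gamma (1 + (m : ℝ) * β) / (Nat.factorial m : ℝ)) ^ (1 / (2 * (m : ℝ))))
      atTop atTop := by
  -- lower bound each term by 1/(2m)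
  have key : ∀ m : ℕ, 1 ≤ m →
      (1:ℝ)/(2*m) ≤ (Real.Gamma (1 + (m : ℝ) * β) / (Nat.factorial m : ℝ)) ^ (1 / (2 * (m : ℝ))) := by
    intro m hm
    have hm1 : (1:ℝ) ≤ (m:ℝ) := by exact_mod_cast hm
    have hmpos : (0:ℝ) < 2*m := by linarith
    have hfac : (0:ℝ) < (Nat.factorial m : ℝ) := by
      exact_mod_cast Nat.factorial_pos m
    have hG : (1:ℝ)/2 ≤ Real.Gamma (1 + (m:ℝ)*β) := by
      apply gamma_ge_half; nlinarith
    -- show Γ/(m!) ≥ (1/(2m))^(2m)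
    have hbase : ((1:ℝ)/(2*m)) ^ (2*m) ≤ Real.Gamma (1 + (m:ℝ)*β) / (Nat.factorial m : ℝ) := by
      rw [div_pow, one_pow, div_le_div_iff₀ (by positivity) hfac]
      have := factorial_le_pow m hm
      nlinarith [pow_pos hmpos (2*m)]
    calc (1:ℝ)/(2*m) = (((1:ℝ)/(2*m)) ^ (2*m)) ^ (1 / (2 * (m:ℝ))) := by
          rw [← Real.rpow_natCast ((1:ℝ)/(2*m)) (2*m), ← Real.rpow_mul (by positivity)]
          push_cast
          rw [mul_one_div, div_self (by positivity), Real.rpow_one]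
    _ ≤ (Real.Gamma (1 + (m : ℝ) * β) / (Nat.factorial m : ℝ)) ^ (1 / (2 * (m : ℝ))) := by
          apply Real.rpow_le_rpow (by positivity) hbase (by positivity)
  -- harmonic series comparison
  have hharm : Tendsto (fun N : ℕ => ∑ i ∈ Finset.range N, (1:ℝ)/(2*(i+1))) atTop atTop := by
    have := Real.tendsto_sum_range_one_div_nat_succ_atTop
    have h2 : Tendsto (fun N : ℕ => (1/2 : ℝ) * ∑ i ∈ Finset.range N, (1 / (i + 1) : ℝ)) atTop atTop :=
      Tendsto.const_mul_atTop (by norm_num) this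
    convert h2 using 2 with N
    rw [Finset.mul_sum]
    apply Finset.sum_congr rfl
    intro i _
    field_simp
  apply tendsto_atTop_mono _ hharm
  intro N
  have hre : ∑ i ∈ Finset.range N, (1:ℝ)/(2*(i+1)) = ∑ m ∈ Finset.Icc 1 N, (1:ℝ)/(2*m) := by
    rw [show Finset.Icc 1 N = Finset.Ico 1 (N+1) by rfl, Finset.sum_Ico_eq_sum_range]
    simp only [Nat.add_sub_cancel]
    exact Finset.sum_congr rfl fun i _ => by push_cast; ring_nf
  rw [hre]
  apply Finset.sum_le_sum
  intro m hmm
  exact key m (Finset.mem_Icc.mp hmm).1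
end

section
/- Let T be an ergodic conservative measure-preserving map of an infinite σ-finite measure space (E,ℰ,μ), and let A be a Darling–Kac set for T with normalizing sequence (a_n). Then (1/a_n) Σ_{k=1}^n μ(A ∩ T^{-k}A) → μ(A)² as n→∞. -/
open MeasureTheory ProbabilityTheory Filter
open scoped ENNReal

/-- The dual operator `T̂` acting on nonnegative (ℝ≥0∞-valued) functions:
`T̂ f` is the Radon–Nikodym derivative with respect to `μ` of the pushforward
under `T` of the measure with density `f` with respect to `μ`. -/
noncomputable def dualPos {E : Type*} [MeasurableSpace E] (T : E → E) (μ : Measure E)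
    (f : E → ℝ≥0∞) : E → ℝ≥0∞ :=
  Measure.rnDeriv (Measure.map T (μ.withDensity f)) μ

/-- The dual operator `T̂` acting on real-valued functions, extended from
nonnegative functions by linearity. -/
noncomputable def dualOp {E : Type*} [MeasurableSpace E] (T : E → E) (μ : Measure E)
    (f : E → ℝ) : E → ℝ :=
  fun x => (dualPos T μ (fun y => ENNReal.ofReal (f y)) x).toReal
    - (dualPos T μ (fun y => ENNReal.ofReal (-f y)) x).toReal

/-- `T` is pointwise dual ergodic with normalizing sequence `a`:
`a_n → ∞` and `(1/a_n) Σ_{k=1}^n T̂^k f → ∫ f dμ` μ-a.e. for every `f ∈ L¹(μ)`. -/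
def PointwiseDualErgodic {E : Type*} [MeasurableSpace E] (T : E → E) (μ : Measure E)
    (a : ℕ → ℝ) : Prop :=
  Filter.Tendsto a Filter.atTop Filter.atTop ∧
  ∀ f : E → ℝ, Integrable f μ →
    ∀ᵐ x ∂μ, Filter.Tendsto
      (fun n : ℕ => (a n)⁻¹ * ∑ k ∈ Finset.Icc 1 n, (dualOp T μ)^[k] f x)
      Filter.atTop (nhds (∫ y, f y ∂μ))

/-- A sequence of positive reals is regularly varying with exponent `β`. -/
def RegularlyVarying (a : ℕ → ℝ) (β : ℝ) : Prop :=
  (∀ n : ℕ, 1 ≤ n → 0 < a n) ∧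
  ∀ lam : ℝ, 0 < lam →
    Filter.Tendsto (fun n : ℕ => a ⌈lam * (n : ℝ)⌉₊ / a n) Filter.atTop (nhds (lam ^ β))

/-- `A` is a Darling–Kac set for `T` with normalizing sequence `a`:
`0 < μ(A) < ∞` and `(1/a_n) Σ_{k=1}^n T̂^k 1_A → μ(A)` uniformly on a measurable
subset of `A` of full measure in `A`. -/
def DarlingKacSet {E : Type*} [MeasurableSpace E] (T : E → E) (μ : Measure E)
    (a : ℕ → ℝ) (A : Set E) : Prop :=
  MeasurableSet A ∧ 0 < μ A ∧ μ A < ⊤ ∧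
  Filter.Tendsto a Filter.atTop Filter.atTop ∧
  ∃ B ⊆ A, MeasurableSet B ∧ μ B = μ A ∧
    TendstoUniformlyOn
      (fun (n : ℕ) (x : E) => (a n)⁻¹ * ∑ k ∈ Finset.Icc 1 n, (dualOp T μ)^[k] (A.indicator 1) x)
      (fun _ => (μ A).toReal) Filter.atTop B

/-- `A` is a uniform set for the nonnegative integrable function `g`:
`(1/a_n) Σ_{k=1}^n T̂^k g → ∫ g dμ` uniformly on a measurable subset of `A`
of full measure in `A`. -/
def UniformSet {E : Type*} [MeasurableSpace E] (T : E → E) (μ : Measure E)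
    (a : ℕ → ℝ) (A : Set E) (g : E → ℝ) : Prop :=
  ∃ B ⊆ A, MeasurableSet B ∧ μ B = μ A ∧
    TendstoUniformlyOn
      (fun (n : ℕ) (x : E) => (a n)⁻¹ * ∑ k ∈ Finset.Icc 1 n, (dualOp T μ)^[k] g x)
      (fun _ => ∫ y, g y ∂μ) Filter.atTop B

/-- The first entrance time `φ(x) = inf{n ≥ 1 : T^n x ∈ A}`, with value `⊤`
if the orbit of `x` never enters `A`. -/
noncomputable def firstEntrance {E : Type*} (T : E → E) (A : Set E) (x : E) : ℕ∞ :=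
  sInf {n : ℕ∞ | ∃ m : ℕ, n = m ∧ 1 ≤ m ∧ T^[m] x ∈ A}

/-- The sequence of sets `A_0 = A`, `A_k = Aᶜ ∩ {φ = k}` for `k ≥ 1`. -/
noncomputable def entranceSets {E : Type*} (T : E → E) (A : Set E) : ℕ → Set E
  | 0 => A
  | (k + 1) => Aᶜ ∩ {x | firstEntrance T A x = ((k + 1 : ℕ) : ℕ∞)}

/-- Condition (strongDK): there is a measurable nonnegative `K` with
`T̂^n 1_{A_n} / μ(A_n) → K` uniformly on a measurable subset of `A` of full
measure in `A`. -/
def StrongDK {E : Type*} [MeasurableSpace E] (T : E → E) (μ : Measure E)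
    (A : Set E) : Prop :=
  ∃ K : E → ℝ, Measurable K ∧ (∀ x, 0 ≤ K x) ∧
    ∃ B ⊆ A, MeasurableSet B ∧ μ B = μ A ∧
      TendstoUniformlyOn
        (fun (n : ℕ) (x : E) =>
          (dualOp T μ)^[n] ((entranceSets T A n).indicator 1) x /
            (μ (entranceSets T A n)).toReal)
        K Filter.atTop B

/-- The ergodic sums `S_n(f) = Σ_{k=1}^n f ∘ T^k`. -/
noncomputable def ergSum {E : Type*} (T : E → E) (f : E → ℝ) (n : ℕ) (x : E) : ℝ :=
  ∑ k ∈ Finset.Icc 1 n, f (T^[k] x)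

/-- The wandering rate `w_n = μ(∪_{k=0}^{n-1} T^{-k} A)`. -/
noncomputable def wanderingRate {E : Type*} [MeasurableSpace E] (T : E → E)
    (μ : Measure E) (A : Set E) (n : ℕ) : ℝ≥0∞ :=
  μ (⋃ k ∈ Finset.range n, T^[k] ⁻¹' A)

section Helpers

variable {E : Type*} [MeasurableSpace E] {μ : Measure E} {T : E → E}

lemma dualPos_congr_ae {f g : E → ℝ≥0∞} (h : f =ᵐ[μ] g) :
    dualPos T μ f = dualPos T μ g := by
  unfold dualPos
  rw [withDensity_congr_ae h]

lemma dualOp_congr_ae {f g : E → ℝ} (h : f =ᵐ[μ] g) :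
    dualOp T μ f = dualOp T μ g := by
  unfold dualOp
  rw [dualPos_congr_ae (μ := μ) (T := T) (f := fun y => ENNReal.ofReal (f y))
      (g := fun y => ENNReal.ofReal (g y)) (h.mono fun x hx => by simp only [hx]),
    dualPos_congr_ae (μ := μ) (T := T) (f := fun y => ENNReal.ofReal (-f y))
      (g := fun y => ENNReal.ofReal (-g y)) (h.mono fun x hx => by simp only [hx])]

lemma withDensity_dualPos [SigmaFinite μ] (hT : MeasurePreserving T μ μ)
    {f : E → ℝ≥0∞} (hf : ∫⁻ x, f x ∂μ ≠ ⊤) :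
    μ.withDensity (dualPos T μ f) = Measure.map T (μ.withDensity f) := by
  have hac : Measure.map T (μ.withDensity f) ≪ μ := by
    refine Measure.AbsolutelyContinuous.mk fun s hs hs0 => ?_
    rw [Measure.map_apply hT.measurable hs]
    have : μ (T ⁻¹' s) = 0 := by
      rw [hT.measure_preimage hs.nullMeasurableSet]; exact hs0
    exact withDensity_absolutelyContinuous μ f this
  have hfin : IsFiniteMeasure (Measure.map T (μ.withDensity f)) := by
    constructor
    rw [Measure.map_apply hT.measurable MeasurableSet.univ, Set.preimage_univ,
      withDensity_apply _ MeasurableSet.univ, Measure.restrict_univ]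
    exact hf.lt_top
  exact Measure.withDensity_rnDeriv_eq _ _ hac

lemma setLIntegral_dualPos [SigmaFinite μ] (hT : MeasurePreserving T μ μ)
    {f : E → ℝ≥0∞} (hf : ∫⁻ x, f x ∂μ ≠ ⊤) {S : Set E} (hS : MeasurableSet S) :
    ∫⁻ x in S, dualPos T μ f x ∂μ = ∫⁻ x in T ⁻¹' S, f x ∂μ := by
  rw [← withDensity_apply _ hS, withDensity_dualPos hT hf,
    Measure.map_apply hT.measurable hS, withDensity_apply _ (hT.measurable hS)]

end Helpers

/-- For a Darling–Kac set `A` of an ergodic conservative measure-preserving map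
`T` of an infinite σ-finite measure space, `(1/a_n) Σ_{k=1}^n μ(A ∩ T^{-k}A) → μ(A)²`. -/
theorem darlingKac_correlation_sums
    {E : Type*} [MeasurableSpace E] (μ : Measure E) [SigmaFinite μ]
    (hInf : μ Set.univ = ⊤)
    (T : E → E) (hT : MeasurePreserving T μ μ) (hcons : Conservative T μ)
    (herg : Ergodic T μ)
    (a : ℕ → ℝ) (A : Set E) (hDK : DarlingKacSet T μ a A) :
    Tendsto
      (fun n : ℕ => (a n)⁻¹ * ∑ k ∈ Finset.Icc 1 n, (μ (A ∩ T^[k] ⁻¹' A)).toReal)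
      atTop (nhds ((μ A).toReal ^ 2)) := by
  classical
  obtain ⟨hA, hA0, hAfin, -, B, hBA, hBmeas, hμB, hUnif⟩ := hDK
  set ind : E → ℝ≥0∞ := A.indicator 1 with hind
  set g : ℕ → E → ℝ≥0∞ := fun k => (dualPos T μ)^[k] ind with hgdef
  have hgsucc : ∀ k, g (k + 1) = dualPos T μ (g k) := fun k =>
    Function.iterate_succ_apply' (dualPos T μ) k ind
  -- measurability and set-lintegral identity
  have key : ∀ k : ℕ, Measurable (g k) ∧
      ∀ S : Set E, MeasurableSet S → ∫⁻ x in S, g k x ∂μ = μ (T^[k] ⁻¹' S ∩ A) := by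
    intro k
    induction k with
    | zero =>
      refine ⟨measurable_const.indicator hA, fun S hS => ?_⟩
      show ∫⁻ x in S, A.indicator 1 x ∂μ = μ (T^[0] ⁻¹' S ∩ A)
      rw [lintegral_indicator hA]
      simp only [Pi.one_apply]
      rw [setLIntegral_one, Measure.restrict_apply hA]
      simp [Set.inter_comm]
    | succ k ih =>
      have hfin : ∫⁻ x, g k x ∂μ ≠ ⊤ := by
        have h1 := ih.2 Set.univ MeasurableSet.univ
        rw [Measure.restrict_univ] at h1
        rw [h1]
        simpa using hAfin.ne
      refine ⟨?_, fun S hS => ?_⟩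
      · rw [hgsucc]; exact Measure.measurable_rnDeriv _ _
      · rw [hgsucc, setLIntegral_dualPos hT hfin hS, ih.2 _ (hT.measurable hS)]
        congr 2
        rw [Function.iterate_succ', Set.preimage_comp]
  have hfin : ∀ k, ∫⁻ x, g k x ∂μ ≠ ⊤ := by
    intro k
    have h1 := (key k).2 Set.univ MeasurableSet.univ
    rw [Measure.restrict_univ] at h1
    rw [h1]; simpa using hAfin.ne
  have hlt : ∀ k, ∀ᵐ x ∂μ, g k x ≠ ⊤ := fun k =>
    (ae_lt_top (key k).1 (hfin k)).mono fun x hx => hx.ne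
  -- claim 2 : the real iterates agree a.e. with toReal ∘ g k
  have claim2 : ∀ k : ℕ, (dualOp T μ)^[k] (A.indicator 1) =ᵐ[μ] fun x => (g k x).toReal := by
    intro k
    induction k with
    | zero =>
      refine Filter.Eventually.of_forall fun x => ?_
      show A.indicator (1 : E → ℝ) x = (A.indicator (1 : E → ℝ≥0∞) x).toReal
      by_cases hx : x ∈ A <;> simp [hx]
    | succ k ih =>
      rw [Function.iterate_succ_apply']
      rw [dualOp_congr_ae (μ := μ) ih]
      have h2 : (fun y => ENNReal.ofReal (-(fun x => (g k x).toReal) y)) = fun _ => (0 : ℝ≥0∞) := by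
        funext y
        exact ENNReal.ofReal_of_nonpos (neg_nonpos.mpr ENNReal.toReal_nonneg)
      have h1 : dualPos T μ (fun y => ENNReal.ofReal ((fun x => (g k x).toReal) y)) = g (k + 1) := by
        rw [hgsucc]
        exact dualPos_congr_ae ((hlt k).mono fun x hx => ENNReal.ofReal_toReal hx)
      have h3 : dualPos T μ (fun _ => (0 : ℝ≥0∞)) =ᵐ[μ] fun _ => (0 : ℝ≥0∞) := by
        unfold dualPos
        have : μ.withDensity (fun _ => (0 : ℝ≥0∞)) = 0 := withDensity_zero
        rw [this, Measure.map_zero]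
        exact Measure.rnDeriv_zero μ
      show (dualOp T μ) (fun x => (g k x).toReal) =ᵐ[μ] fun x => (g (k + 1) x).toReal
      unfold dualOp
      rw [h1, h2]
      filter_upwards [h3] with x hx
      rw [hx]
      simp
  -- the basic data
  set c : ℝ := (μ A).toReal with hc
  have hμBfin : μ B ≠ ⊤ := by rw [hμB]; exact hAfin.ne
  have hMc : (μ B).toReal = c := by rw [hμB]
  have hBAe : B =ᵐ[μ] A := by
    rw [Filter.eventuallyEq_set]
    have hdiff : μ (A \ B) = 0 := by
      rw [measure_diff hBA hBmeas.nullMeasurableSet hμBfin, hμB, tsub_self]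
    filter_upwards [measure_eq_zero_iff_ae_notMem.mp hdiff] with x hx
    constructor
    · exact fun h => hBA h
    · intro h
      by_contra hB
      exact hx ⟨h, hB⟩
  -- integral identities
  have hIntEq : ∀ k : ℕ, (μ (A ∩ T^[k] ⁻¹' A)).toReal = ∫ x in B, (g k x).toReal ∂μ := by
    intro k
    rw [integral_toReal ((key k).1.aemeasurable.restrict)
      (ae_restrict_of_ae ((ae_lt_top (key k).1 (hfin k))))]
    rw [setLIntegral_congr hBAe, (key k).2 A hA, Set.inter_comm]
  have hIntg : ∀ k : ℕ, Integrable (fun x => (g k x).toReal) (μ.restrict B) := by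
    intro k
    refine integrable_toReal_of_lintegral_ne_top ((key k).1.aemeasurable.restrict) ?_
    exact fun h => hfin k (top_le_iff.mp (h ▸ setLIntegral_le_lintegral B (g k)))
  -- rewrite target as integral over B
  set G : ℕ → E → ℝ := fun n x => (a n)⁻¹ * ∑ k ∈ Finset.Icc 1 n, (g k x).toReal with hGdef
  have hGint : ∀ n, Integrable (G n) (μ.restrict B) := fun n =>
    (integrable_finset_sum _ fun k _ => hIntg k).const_mul _
  have hrep : ∀ n : ℕ,
      (a n)⁻¹ * ∑ k ∈ Finset.Icc 1 n, (μ (A ∩ T^[k] ⁻¹' A)).toReal = ∫ x in B, G n x ∂μ := by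
    intro n
    rw [integral_const_mul, integral_finset_sum _ fun k _ => hIntg k]
    congr 1
    exact Finset.sum_congr rfl fun k _ => hIntEq k
  have hGF : ∀ n : ℕ,
      (fun x => (a n)⁻¹ * ∑ k ∈ Finset.Icc 1 n, (dualOp T μ)^[k] (A.indicator 1) x)
        =ᵐ[μ] G n := by
    intro n
    have h : ∀ᵐ x ∂μ, ∀ k : ℕ, (dualOp T μ)^[k] (A.indicator 1) x = (g k x).toReal :=
      ae_all_iff.mpr claim2
    filter_upwards [h] with x hx
    simp only [hGdef]
    congr 1
    exact Finset.sum_congr rfl fun k _ => hx k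
  haveI hresFin : IsFiniteMeasure (μ.restrict B) :=
    ⟨by rw [Measure.restrict_apply_univ]; exact lt_top_iff_ne_top.mpr hμBfin⟩
  -- final limit argument
  rw [Metric.tendsto_atTop]
  intro ε hε
  set M : ℝ := (μ B).toReal with hM
  have hM0 : (0 : ℝ) ≤ M := ENNReal.toReal_nonneg
  have hε' : 0 < ε / (2 * (M + 1)) := by positivity
  rw [Metric.tendstoUniformlyOn_iff] at hUnif
  obtain ⟨N, hN⟩ := eventually_atTop.mp (hUnif _ hε')
  refine ⟨N, fun n hn => ?_⟩
  have hbound : ∀ᵐ x ∂μ.restrict B, ‖G n x - c‖ ≤ ε / (2 * (M + 1)) := by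
    filter_upwards [ae_restrict_of_ae (hGF n), ae_restrict_mem hBmeas] with x hx hxB
    rw [← hx, Real.norm_eq_abs, abs_sub_comm, ← Real.dist_eq]
    exact (hN n hn x hxB).le
  have hconst : ∫ x in B, c ∂μ = M * c := by
    rw [setIntegral_const, smul_eq_mul]; rfl
  have hineq : ‖∫ x in B, G n x ∂μ - M * c‖ ≤ ε / (2 * (M + 1)) * M := by
    rw [← hconst, ← integral_sub (hGint n) (integrable_const c)]
    have := norm_integral_le_of_norm_le_const (μ := μ.restrict B)
      (f := fun x => G n x - c) hbound
    rwa [Measure.real, Measure.restrict_apply_univ] at this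
  rw [Real.dist_eq, hrep n]
  have hMc' : M = c := hMc
  have hc2 : c ^ 2 = M * c := by rw [hMc']; ring
  rw [hc2, ← Real.norm_eq_abs]
  calc ‖∫ x in B, G n x ∂μ - M * c‖ ≤ ε / (2 * (M + 1)) * M := hineq
    _ < ε := by
        rw [div_mul_eq_mul_div, div_lt_iff₀ (by positivity)]
        nlinarith
end

section
/- Let T be an ergodic conservative measure-preserving map of an infinite σ-finite measure space (E,ℰ,μ), let A be a Darling–Kac set for T with normalizing sequence (a_n) satisfying a_n/n → 0, and let f:E→ℝ be a measurable function vanishing outside A. Then for every ε>0, (1/n) Σ_{k=1}^n μ( { x∈E : |f(x)|>ε and |f(T^k x)|>ε } ) → 0 as n→∞. -/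
open MeasureTheory ProbabilityTheory Filter
open scoped ENNReal

section DKAux

variable {E : Type*} [MeasurableSpace E] {T : E → E} {μ : Measure E} {A : Set E}

private lemma DK_dualPos_congr {g₁ g₂ : E → ℝ≥0∞} (h : g₁ =ᵐ[μ] g₂) :
    dualPos T μ g₁ = dualPos T μ g₂ := by
  unfold dualPos
  rw [withDensity_congr_ae h]

private lemma DK_dualPos_zero : dualPos T μ (fun _ => 0) =ᵐ[μ] 0 := by
  unfold dualPos
  rw [show (fun _ : E => (0 : ℝ≥0∞)) = 0 from rfl, withDensity_zero, Measure.map_zero]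
  exact μ.rnDeriv_zero

private lemma DK_setLIntegral_dualPos [SigmaFinite μ] (hT : Measurable T) (hTp : MeasurePreserving T μ μ)
    {g : E → ℝ≥0∞} (hfin : ∫⁻ x, g x ∂μ ≠ ⊤) {S : Set E} (hS : MeasurableSet S) :
    ∫⁻ x in S, dualPos T μ g x ∂μ = ∫⁻ x in T ⁻¹' S, g x ∂μ := by
  set ν := Measure.map T (μ.withDensity g) with hν
  haveI : IsFiniteMeasure ν := by
    constructor
    rw [hν, Measure.map_apply hT MeasurableSet.univ, Set.preimage_univ,
      withDensity_apply _ MeasurableSet.univ, Measure.restrict_univ]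
    exact hfin.lt_top
  have hac : ν ≪ μ := by
    refine Measure.AbsolutelyContinuous.mk (fun s hs h0 => ?_)
    rw [hν, Measure.map_apply hT hs]
    refine withDensity_absolutelyContinuous μ g ?_
    rw [hTp.measure_preimage hs.nullMeasurableSet]
    exact h0
  rw [show dualPos T μ g = ν.rnDeriv μ from rfl,
    Measure.setLIntegral_rnDeriv' hac hS, hν, Measure.map_apply hT hS,
    withDensity_apply _ (hT hS)]

private lemma DK_iter [SigmaFinite μ] (hT : Measurable T) (hTp : MeasurePreserving T μ μ)
    (hA : MeasurableSet A) (hAfin : μ A ≠ ⊤) (k : ℕ) :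
    Measurable ((dualPos T μ)^[k] (A.indicator 1)) ∧
      ∀ S : Set E, MeasurableSet S →
        ∫⁻ x in S, (dualPos T μ)^[k] (A.indicator 1) x ∂μ = μ (A ∩ T^[k] ⁻¹' S) := by
  induction k with
  | zero =>
    refine ⟨(measurable_one.indicator hA), fun S hS => ?_⟩
    simp only [Function.iterate_zero, id_eq]
    rw [lintegral_indicator_one hA, Measure.restrict_apply hA]
    simp
  | succ k ih =>
    obtain ⟨ihm, ihs⟩ := ih
    have hfin : ∫⁻ x, (dualPos T μ)^[k] (A.indicator 1) x ∂μ ≠ ⊤ := by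
      rw [← setLIntegral_univ, ihs Set.univ MeasurableSet.univ]
      exact ((measure_mono Set.inter_subset_left).trans_lt hAfin.lt_top).ne
    constructor
    · rw [Function.iterate_succ_apply']
      exact Measure.measurable_rnDeriv _ _
    · intro S hS
      have h1 : ∀ x, (dualPos T μ)^[k + 1] (A.indicator 1) x
          = dualPos T μ ((dualPos T μ)^[k] (A.indicator 1)) x := by
        intro x; rw [Function.iterate_succ_apply']
      simp only [h1]
      rw [DK_setLIntegral_dualPos hT hTp hfin hS, ihs _ (hT hS)]
      congr 1
      rw [Function.iterate_succ', Set.preimage_comp]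

private lemma DK_dual_eq [SigmaFinite μ] (hT : Measurable T) (hTp : MeasurePreserving T μ μ)
    (hA : MeasurableSet A) (hAfin : μ A ≠ ⊤) (k : ℕ) :
    (dualOp T μ)^[k] (A.indicator 1) =ᵐ[μ]
      fun x => ((dualPos T μ)^[k] (A.indicator 1) x).toReal := by
  induction k with
  | zero =>
    refine Filter.EventuallyEq.of_eq (funext fun x => ?_)
    simp only [Function.iterate_zero, id_eq]
    by_cases hx : x ∈ A <;> simp [Set.indicator, hx]
  | succ k ih =>
    set g : E → ℝ := (dualOp T μ)^[k] (A.indicator 1) with hg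
    set F : E → ℝ≥0∞ := (dualPos T μ)^[k] (A.indicator 1) with hF
    have hFm : Measurable F := (DK_iter hT hTp hA hAfin k).1
    have hFfin : ∀ᵐ x ∂μ, F x < ⊤ := by
      refine ae_lt_top hFm ?_
      rw [← setLIntegral_univ, (DK_iter hT hTp hA hAfin k).2 Set.univ MeasurableSet.univ]
      exact ((measure_mono Set.inter_subset_left).trans_lt hAfin.lt_top).ne
    have h1 : (fun y => ENNReal.ofReal (g y)) =ᵐ[μ] F := by
      filter_upwards [ih, hFfin] with x hx hlt
      rw [hx, ENNReal.ofReal_toReal hlt.ne]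
    have h2 : (fun y => ENNReal.ofReal (-g y)) =ᵐ[μ] fun _ => 0 := by
      filter_upwards [ih] with x hx
      rw [hx, ENNReal.ofReal_eq_zero]
      simp [ENNReal.toReal_nonneg]
    have e1 : dualPos T μ (fun y => ENNReal.ofReal (g y)) = dualPos T μ F :=
      DK_dualPos_congr h1
    have e2 : dualPos T μ (fun y => ENNReal.ofReal (-g y)) =ᵐ[μ] 0 := by
      rw [DK_dualPos_congr h2]
      exact DK_dualPos_zero
    have hs1 : (dualOp T μ)^[k + 1] (A.indicator 1) = dualOp T μ g := by
      rw [hg, Function.iterate_succ_apply']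
    have hs2 : (dualPos T μ)^[k + 1] (A.indicator 1) = dualPos T μ F := by
      rw [hF, Function.iterate_succ_apply']
    rw [hs1, hs2]
    filter_upwards [e2] with x hx
    show (dualPos T μ (fun y => ENNReal.ofReal (g y)) x).toReal
        - (dualPos T μ (fun y => ENNReal.ofReal (-g y)) x).toReal
      = (dualPos T μ F x).toReal
    rw [e1, hx]
    simp

end DKAux

/-- If `A` is a Darling–Kac set with `a_n/n → 0` and `f` vanishes outside `A`,
then `(1/n) Σ_{k=1}^n μ{|f| > ε, |f ∘ T^k| > ε} → 0` for every `ε > 0`. -/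

theorem darlingKac_ergodicity_condition
    {E : Type*} [MeasurableSpace E] (μ : Measure E) [SigmaFinite μ]
    (hInf : μ Set.univ = ⊤)
    (T : E → E) (hT : MeasurePreserving T μ μ) (hcons : Conservative T μ)
    (herg : Ergodic T μ)
    (a : ℕ → ℝ) (A : Set E) (hDK : DarlingKacSet T μ a A)
    (han : Tendsto (fun n : ℕ => a n / (n : ℝ)) atTop (nhds 0))
    (f : E → ℝ) (hfmeas : Measurable f) (hsupp : ∀ x ∉ A, f x = 0)
    (ε : ℝ) (hε : 0 < ε) :
    Tendsto
      (fun n : ℕ => ((n : ℝ))⁻¹ *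
        ∑ k ∈ Finset.Icc 1 n, (μ {x | ε < |f x| ∧ ε < |f (T^[k] x)|}).toReal)
      atTop (nhds 0) := by
  obtain ⟨hA, hA0, hAfin, hatop, B, hBA, hBmeas, hBfull, hunif⟩ := hDK
  have hTm : Measurable T := hT.measurable
  set C : Set E := {x | ε < |f x|} with hCdef
  have hC : MeasurableSet C := measurableSet_lt measurable_const hfmeas.abs
  have hCA : C ⊆ A := by
    intro x hx
    by_contra h
    rw [hCdef] at hx
    simp only [Set.mem_setOf_eq, hsupp x h, abs_zero] at hx
    exact absurd hx (not_lt.2 hε.le)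
  have hSk : ∀ k : ℕ, {x | ε < |f x| ∧ ε < |f (T^[k] x)|} = C ∩ T^[k] ⁻¹' C :=
    fun k => rfl
  have hμC : μ C ≠ ⊤ := ((measure_mono hCA).trans_lt hAfin).ne
  have hABnull : μ (A \ B) = 0 := by
    rw [measure_diff hBA hBmeas.nullMeasurableSet (by rw [hBfull]; exact hAfin.ne),
      hBfull, tsub_self]
  have hboundR : ∀ᶠ n : ℕ in atTop,
      ((n : ℝ))⁻¹ *
          ∑ k ∈ Finset.Icc 1 n, (μ {x | ε < |f x| ∧ ε < |f (T^[k] x)|}).toReal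
        ≤ a n / n * (((μ A).toReal + 1) * (μ C).toReal) := by
    filter_upwards [Metric.tendstoUniformlyOn_iff.1 hunif 1 one_pos,
      hatop.eventually_ge_atTop 1] with n hu ha
    have hapos : (0 : ℝ) < a n := lt_of_lt_of_le one_pos ha
    have hsum : ∑ k ∈ Finset.Icc 1 n, μ (C ∩ T^[k] ⁻¹' C)
        ≤ ENNReal.ofReal (a n * ((μ A).toReal + 1)) * μ C := by
      have hae : ∀ᵐ x ∂μ, ∀ k ∈ Finset.Icc 1 n,
          (dualOp T μ)^[k] (A.indicator 1) x
              = ((dualPos T μ)^[k] (A.indicator 1) x).toReal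
            ∧ (dualPos T μ)^[k] (A.indicator 1) x ≠ ⊤ := by
        rw [eventually_all_finset]
        intro k _
        have hfink : ∫⁻ x, (dualPos T μ)^[k] (A.indicator 1) x ∂μ ≠ ⊤ := by
          rw [← setLIntegral_univ, (DK_iter hTm hT hA hAfin.ne k).2 Set.univ
            MeasurableSet.univ]
          exact ((measure_mono Set.inter_subset_left).trans_lt hAfin).ne
        filter_upwards [DK_dual_eq hTm hT hA hAfin.ne k,
          ae_lt_top (DK_iter hTm hT hA hAfin.ne k).1 hfink] with x h1 h2
        exact ⟨h1, h2.ne⟩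
      calc ∑ k ∈ Finset.Icc 1 n, μ (C ∩ T^[k] ⁻¹' C)
          ≤ ∑ k ∈ Finset.Icc 1 n,
              ∫⁻ x in C, (dualPos T μ)^[k] (A.indicator 1) x ∂μ := by
            refine Finset.sum_le_sum fun k _ => ?_
            rw [(DK_iter hTm hT hA hAfin.ne k).2 C hC]
            exact measure_mono (Set.inter_subset_inter_left _ hCA)
        _ = ∫⁻ x in C, ∑ k ∈ Finset.Icc 1 n,
              (dualPos T μ)^[k] (A.indicator 1) x ∂μ :=
            (lintegral_finset_sum _ fun k _ => (DK_iter hTm hT hA hAfin.ne k).1).symm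
        _ = ∫⁻ x in C ∩ B, ∑ k ∈ Finset.Icc 1 n,
              (dualPos T μ)^[k] (A.indicator 1) x ∂μ := by
            refine setLIntegral_congr ?_
            rw [MeasureTheory.ae_eq_set]
            constructor
            · refine measure_mono_null (fun x hx => ?_) hABnull
              exact ⟨hCA hx.1, fun hB => hx.2 ⟨hx.1, hB⟩⟩
            · have : (C ∩ B) \ C = ∅ := by
                ext x; simp only [Set.mem_diff, Set.mem_inter_iff, Set.mem_empty_iff_false,
                  iff_false, not_and, and_imp]
                exact fun h _ h2 => absurd h h2
              rw [this, measure_empty]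
        _ ≤ ∫⁻ _ in C ∩ B, ENNReal.ofReal (a n * ((μ A).toReal + 1)) ∂μ := by
            refine lintegral_mono_ae ?_
            filter_upwards [ae_restrict_of_ae hae, ae_restrict_mem (hC.inter hBmeas)]
              with x hx hxCB
            set s : ℝ := ∑ k ∈ Finset.Icc 1 n, (dualOp T μ)^[k] (A.indicator 1) x
              with hs
            have heq : ENNReal.ofReal s
                = ∑ k ∈ Finset.Icc 1 n, (dualPos T μ)^[k] (A.indicator 1) x := by
              rw [hs, ENNReal.ofReal_sum_of_nonneg (fun k hk => by
                rw [(hx k hk).1]; exact ENNReal.toReal_nonneg)]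
              exact Finset.sum_congr rfl fun k hk => by
                rw [(hx k hk).1, ENNReal.ofReal_toReal (hx k hk).2]
            rw [← heq]
            apply ENNReal.ofReal_le_ofReal
            have hdist := hu x hxCB.2
            rw [Real.dist_eq] at hdist
            have h3 : (a n)⁻¹ * s ≤ (μ A).toReal + 1 := by
              have h4 := abs_lt.1 hdist
              rw [hs]
              linarith [h4.1]
            calc s = a n * ((a n)⁻¹ * s) := by field_simp
              _ ≤ a n * ((μ A).toReal + 1) :=
                mul_le_mul_of_nonneg_left h3 hapos.le
        _ = ENNReal.ofReal (a n * ((μ A).toReal + 1)) * μ (C ∩ B) :=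
            setLIntegral_const _ _
        _ ≤ ENNReal.ofReal (a n * ((μ A).toReal + 1)) * μ C :=
            mul_le_mul_right (measure_mono Set.inter_subset_left) _
    have hsum' : ∑ k ∈ Finset.Icc 1 n, (μ {x | ε < |f x| ∧ ε < |f (T^[k] x)|}).toReal
        ≤ a n * ((μ A).toReal + 1) * (μ C).toReal := by
      have hne : ∀ k ∈ Finset.Icc 1 n, μ (C ∩ T^[k] ⁻¹' C) ≠ ⊤ :=
        fun k _ => ((measure_mono (Set.inter_subset_left.trans hCA)).trans_lt hAfin).ne
      simp only [hSk]
      rw [← ENNReal.toReal_sum hne]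
      calc (∑ k ∈ Finset.Icc 1 n, μ (C ∩ T^[k] ⁻¹' C)).toReal
          ≤ (ENNReal.ofReal (a n * ((μ A).toReal + 1)) * μ C).toReal :=
            ENNReal.toReal_mono (ENNReal.mul_ne_top ENNReal.ofReal_ne_top hμC) hsum
        _ = a n * ((μ A).toReal + 1) * (μ C).toReal := by
            rw [ENNReal.toReal_mul, ENNReal.toReal_ofReal
              (mul_nonneg hapos.le (by positivity))]
    calc ((n : ℝ))⁻¹ *
          ∑ k ∈ Finset.Icc 1 n, (μ {x | ε < |f x| ∧ ε < |f (T^[k] x)|}).toReal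
        ≤ ((n : ℝ))⁻¹ * (a n * ((μ A).toReal + 1) * (μ C).toReal) :=
          mul_le_mul_of_nonneg_left hsum' (by positivity)
      _ = a n / n * (((μ A).toReal + 1) * (μ C).toReal) := by ring
  have hpos : ∀ᶠ n : ℕ in atTop, 0 ≤ ((n : ℝ))⁻¹ *
      ∑ k ∈ Finset.Icc 1 n, (μ {x | ε < |f x| ∧ ε < |f (T^[k] x)|}).toReal := by
    refine Filter.Eventually.of_forall fun n => mul_nonneg (by positivity) ?_
    exact Finset.sum_nonneg fun k _ => ENNReal.toReal_nonneg
  refine squeeze_zero' hpos hboundR ?_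
  have := han.mul_const (((μ A).toReal + 1) * (μ C).toReal)
  simpa using this
end

section
/- Let T be an ergodic conservative measure-preserving map of an infinite σ-finite measure space (E,ℰ,μ), and let A be a Darling–Kac set for T whose normalizing sequence (a_n) is regularly varying with exponent β∈(0,1). Let f∈L²(μ) vanish outside A, and assume A is a uniform set for |f|. Let φ be the first entrance time to A and S_n(f)=Σ_{k=1}^n f∘T^k. Then sup_{n≥1} ( a_n² μ({φ ≤ n}) )^{-1} ∫_E S_n(f)² dμ < ∞. -/
open MeasureTheory ProbabilityTheory Filter
open scoped ENNReal

section adj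
variable {E : Type*} [MeasurableSpace E] {μ : Measure E} [SigmaFinite μ] {T : E → E}

lemma dualOp_measurable (T : E → E) (μ : Measure E) (h : E → ℝ) :
    Measurable (dualOp T μ h) := by
  apply Measurable.sub <;> exact (Measure.measurable_rnDeriv _ _).ennreal_toReal

lemma dualOp_adjoint (hT : MeasurePreserving T μ μ) (h : E → ℝ) (hm : Measurable h)
    (h0 : 0 ≤ᵐ[μ] h) (hint : ∫⁻ x, ENNReal.ofReal (h x) ∂μ ≠ ⊤) :
    (0 ≤ᵐ[μ] dualOp T μ h) ∧
    ∀ u : E → ℝ≥0∞, Measurable u →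
      ∫⁻ x, ENNReal.ofReal (dualOp T μ h x) * u x ∂μ
        = ∫⁻ x, ENNReal.ofReal (h x) * u (T x) ∂μ := by
  set H : E → ℝ≥0∞ := fun y => ENNReal.ofReal (h y) with hH
  have hHm : Measurable H := hm.ennreal_ofReal
  have hν : IsFiniteMeasure (μ.withDensity H) := isFiniteMeasure_withDensity hint
  set ν' : Measure E := Measure.map T (μ.withDensity H) with hν'def
  have hν'fin : IsFiniteMeasure ν' := by
    constructor
    rw [hν'def, Measure.map_apply hT.measurable MeasurableSet.univ]
    simp only [Set.preimage_univ]
    exact measure_lt_top _ _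
  have hac : ν' ≪ μ := by
    refine Measure.AbsolutelyContinuous.mk fun s hs h0 => ?_
    rw [hν'def, Measure.map_apply hT.measurable hs,
      withDensity_apply _ (hT.measurable hs)]
    exact setLIntegral_measure_zero _ _ (by rw [hT.measure_preimage hs.nullMeasurableSet]; exact h0)
  have hneg : μ.withDensity (fun y => ENNReal.ofReal (-h y)) = 0 := by
    have : (fun y => ENNReal.ofReal (-h y)) =ᵐ[μ] 0 := by
      filter_upwards [h0] with x hx
      simp only [Pi.zero_apply] at hx ⊢
      exact ENNReal.ofReal_eq_zero.2 (by linarith)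
    rw [withDensity_congr_ae this, withDensity_zero]
  have hnegae : dualPos T μ (fun y => ENNReal.ofReal (-h y)) =ᵐ[μ] 0 := by
    unfold dualPos
    rw [hneg, Measure.map_zero]
    exact Measure.rnDeriv_zero μ
  have hlt : ∀ᵐ x ∂μ, ν'.rnDeriv μ x < ⊤ := Measure.rnDeriv_lt_top _ _
  have hval : ∀ᵐ x ∂μ, dualOp T μ h x = (ν'.rnDeriv μ x).toReal := by
    filter_upwards [hnegae] with x hx
    unfold dualOp
    rw [hx]
    simp [dualPos, hν'def]
    rfl
  have hkey : (fun x => ENNReal.ofReal (dualOp T μ h x)) =ᵐ[μ] ν'.rnDeriv μ := by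
    filter_upwards [hval, hlt] with x hx1 hx2
    rw [hx1, ENNReal.ofReal_toReal hx2.ne]
  refine ⟨?_, ?_⟩
  · filter_upwards [hval] with x hx
    rw [Pi.zero_apply, hx]
    exact ENNReal.toReal_nonneg
  · intro u hu
    calc ∫⁻ x, ENNReal.ofReal (dualOp T μ h x) * u x ∂μ
        = ∫⁻ x, ν'.rnDeriv μ x * u x ∂μ := by
          apply lintegral_congr_ae; filter_upwards [hkey] with x hx; rw [hx]
      _ = ∫⁻ x, u x ∂(μ.withDensity (ν'.rnDeriv μ)) := by
          rw [lintegral_withDensity_eq_lintegral_mul μ (Measure.measurable_rnDeriv _ _) hu]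
          rfl
      _ = ∫⁻ x, u x ∂ν' := by rw [Measure.withDensity_rnDeriv_eq ν' μ hac]
      _ = ∫⁻ x, u (T x) ∂(μ.withDensity H) := lintegral_map hu hT.measurable
      _ = ∫⁻ x, ENNReal.ofReal (h x) * u (T x) ∂μ := by
          exact lintegral_withDensity_eq_lintegral_mul μ hHm (hu.comp hT.measurable)

end adj

section iter
variable {E : Type*} [MeasurableSpace E] {μ : Measure E} [SigmaFinite μ] {T : E → E}

lemma dual_iter (hT : MeasurePreserving T μ μ) (g : E → ℝ) (hgm : Measurable g)
    (hg0 : ∀ x, 0 ≤ g x) (hgint : ∫⁻ x, ENNReal.ofReal (g x) ∂μ ≠ ⊤) (m : ℕ) :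
    Measurable ((dualOp T μ)^[m] g) ∧ (0 ≤ᵐ[μ] (dualOp T μ)^[m] g) ∧
    ∀ u : E → ℝ≥0∞, Measurable u →
      ∫⁻ x, ENNReal.ofReal ((dualOp T μ)^[m] g x) * u x ∂μ
        = ∫⁻ x, ENNReal.ofReal (g x) * u (T^[m] x) ∂μ := by
  induction m with
  | zero => exact ⟨hgm, Filter.Eventually.of_forall hg0, fun u hu => rfl⟩
  | succ m ih =>
    obtain ⟨ihm, ih0, ihu⟩ := ih
    have hint' : ∫⁻ x, ENNReal.ofReal ((dualOp T μ)^[m] g x) ∂μ ≠ ⊤ := by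
      have := ihu 1 measurable_one
      simp only [Pi.one_apply, mul_one] at this
      rw [this]
      exact hgint
    obtain ⟨h0', hadj⟩ := dualOp_adjoint hT _ ihm ih0 hint'
    rw [Function.iterate_succ_apply']
    refine ⟨dualOp_measurable T μ _, h0', fun u hu => ?_⟩
    rw [hadj u hu, ihu (fun x => u (T x)) (hu.comp hT.measurable)]
    apply lintegral_congr fun x => ?_
    rw [Function.iterate_succ_apply']

end iter

section helpers
variable {E : Type*} [MeasurableSpace E] {μ : Measure E}

lemma sqrt_mul_self' (x : ℝ≥0∞) : x ^ ((1:ℝ)/2) * x ^ ((1:ℝ)/2) = x := by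
  rw [← ENNReal.rpow_add_of_nonneg (x := x) _ _ (by norm_num) (by norm_num)]
  norm_num

lemma lint_cauchy {f g : E → ℝ≥0∞} (hf : Measurable f) (hg : Measurable g) :
    ∫⁻ x, f x * g x ∂μ ≤ (∫⁻ x, f x ^ 2 ∂μ) ^ ((1:ℝ)/2) * (∫⁻ x, g x ^ 2 ∂μ) ^ ((1:ℝ)/2) := by
  have hpq : Real.HolderConjugate 2 2 := ⟨by norm_num, by norm_num, by norm_num⟩
  have := ENNReal.lintegral_mul_le_Lp_mul_Lq μ hpq hf.aemeasurable hg.aemeasurable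
  simp only [Pi.mul_apply] at this
  calc ∫⁻ x, f x * g x ∂μ ≤ (∫⁻ a, f a ^ (2:ℝ) ∂μ) ^ (1/(2:ℝ)) * (∫⁻ a, g a ^ (2:ℝ) ∂μ) ^ (1/(2:ℝ)) := this
    _ = _ := by
        congr 1 <;> · congr 1; apply lintegral_congr fun x => ?_; rw [← ENNReal.rpow_natCast]; norm_num

lemma reindex_bound (v : ℕ → ℝ≥0∞) (n j : ℕ) (hj1 : 1 ≤ j) (hjn : j ≤ n) :
    ∑ k ∈ Finset.Icc 1 n, (if j ≤ k then v (k - j) else 0) ≤ ∑ m ∈ Finset.range (n+1), v m := by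
  rw [Finset.sum_ite, Finset.sum_const_zero, add_zero]
  have h1 : (Finset.Icc 1 n).filter (fun k => j ≤ k) ⊆ Finset.Icc j n := by
    intro k hk
    simp only [Finset.mem_filter, Finset.mem_Icc] at hk ⊢
    exact ⟨hk.2, hk.1.2⟩
  calc ∑ k ∈ (Finset.Icc 1 n).filter (fun k => j ≤ k), v (k - j)
      ≤ ∑ k ∈ Finset.Icc j n, v (k - j) := Finset.sum_le_sum_of_subset h1
    _ = ∑ m ∈ Finset.Icc 0 (n - j), v m := by
        refine Finset.sum_nbij' (fun k => k - j) (fun m => m + j) ?_ ?_ ?_ ?_ ?_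
        · intro k hk; simp only [Finset.mem_Icc] at hk ⊢
          exact ⟨Nat.zero_le _, Nat.sub_le_sub_right hk.2 j⟩
        · intro m hm; simp only [Finset.mem_Icc] at hm ⊢
          exact ⟨Nat.le_add_left _ _, by omega⟩
        · intro k hk; simp only [Finset.mem_Icc] at hk; show k - j + j = k; omega
        · intro m _; show m + j - j = m; omega
        · intro k _; rfl
    _ ≤ ∑ m ∈ Finset.range (n+1), v m := by
        apply Finset.sum_le_sum_of_subset
        intro m hm
        simp only [Finset.mem_Icc, Finset.mem_range] at hm ⊢
        omega

end helpers

section sumbound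
variable {E : Type*} [MeasurableSpace E] {μ : Measure E} [SigmaFinite μ] {T : E → E}

lemma sum_sq_bound (hT : MeasurePreserving T μ μ) {A : Set E} (hA : MeasurableSet A)
    (hAfin : μ A ≠ ⊤) {a : ℕ → ℝ} (ha : ∀ n, 1 ≤ n → 0 < a n)
    {g : E → ℝ} (hgm : Measurable g) (hg0 : ∀ x, 0 ≤ g x) (hsupp : ∀ x ∉ A, g x = 0)
    (hQ : ∫⁻ x, (ENNReal.ofReal (g x))^2 ∂μ ≠ ⊤)
    {L : ℝ} {B : Set E} (hBA : B ⊆ A) (hBm : MeasurableSet B) (hBfull : μ B = μ A)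
    (hunif : TendstoUniformlyOn
      (fun (n : ℕ) (x : E) => (a n)⁻¹ * ∑ k ∈ Finset.Icc 1 n, (dualOp T μ)^[k] g x)
      (fun _ => L) Filter.atTop B) :
    ∃ c : ℝ≥0∞, c ≠ ⊤ ∧ ∀ n : ℕ, 1 ≤ n →
      ∫⁻ x, (∑ k ∈ Finset.Icc 1 n, ENNReal.ofReal (g (T^[k] x)))^2 ∂μ
        ≤ c * n * (1 + ENNReal.ofReal (a n)) := by
  set F : E → ℝ≥0∞ := fun x => ENNReal.ofReal (g x) with hF
  have hFm : Measurable F := hgm.ennreal_ofReal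
  set Q : ℝ≥0∞ := ∫⁻ x, F x ^ 2 ∂μ with hQdef
  set J : ℝ≥0∞ := ∫⁻ x, F x ∂μ with hJdef
  -- J is finite
  have hJ : J ≠ ⊤ := by
    have h1 : J = ∫⁻ x, F x * A.indicator 1 x ∂μ := by
      apply lintegral_congr fun x => ?_
      by_cases hx : x ∈ A
      · simp [Set.indicator_of_mem hx]
      · simp [Set.indicator_of_notMem hx, hF, hsupp x hx]
    have h2 := lint_cauchy (μ := μ) hFm (measurable_one.indicator hA)
    have h3 : ∫⁻ x, (A.indicator 1 x : ℝ≥0∞) ^ 2 ∂μ = μ A := by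
      rw [← lintegral_indicator_one hA]
      apply lintegral_congr fun x => ?_
      by_cases hx : x ∈ A <;> simp [Set.indicator_of_mem, Set.indicator_of_notMem, hx]
    rw [h1]
    refine ne_top_of_le_ne_top ?_ h2
    rw [h3]
    exact ENNReal.mul_ne_top (ENNReal.rpow_ne_top_of_nonneg (by norm_num) hQ)
      (ENNReal.rpow_ne_top_of_nonneg (by norm_num) hAfin)
  -- iterates
  have hgint : ∫⁻ x, ENNReal.ofReal (g x) ∂μ ≠ ⊤ := hJ
  have hiter := fun m => dual_iter hT g hgm hg0 hgint m
  set Tm : ℕ → ℝ≥0∞ := fun m => ∫⁻ x, ENNReal.ofReal ((dualOp T μ)^[m] g x) * F x ∂μ with hTmdef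
  have hTm0 : Tm 0 = Q := by
    rw [hTmdef, hQdef]
    apply lintegral_congr fun x => ?_
    simp [Function.iterate_zero, sq, hF]
  have hTmle : ∀ m, Tm m ≤ Q := by
    intro m
    have := (hiter m).2.2 F hFm
    rw [hTmdef]
    simp only
    rw [this]
    calc ∫⁻ x, ENNReal.ofReal (g x) * F (T^[m] x) ∂μ
        ≤ (∫⁻ x, F x ^ 2 ∂μ) ^ ((1:ℝ)/2) * (∫⁻ x, F (T^[m] x) ^ 2 ∂μ) ^ ((1:ℝ)/2) :=
          lint_cauchy hFm (hFm.comp (hT.iterate m).measurable)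
      _ = Q := by
          rw [(hT.iterate m).lintegral_comp (hFm.pow_const 2), ← hQdef, sqrt_mul_self']
  -- expansion of the square
  have hexp : ∀ n : ℕ, 1 ≤ n →
      ∫⁻ x, (∑ k ∈ Finset.Icc 1 n, F (T^[k] x))^2 ∂μ
        ≤ 2 * n * ∑ m ∈ Finset.range (n+1), Tm m := by
    intro n hn
    have hmeas : ∀ k : ℕ, Measurable fun x => F (T^[k] x) :=
      fun k => hFm.comp (hT.iterate k).measurable
    have hsq : ∀ x, (∑ k ∈ Finset.Icc 1 n, F (T^[k] x))^2
        = ∑ j ∈ Finset.Icc 1 n, ∑ k ∈ Finset.Icc 1 n, F (T^[j] x) * F (T^[k] x) := by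
      intro x; rw [sq, Finset.sum_mul_sum]
    have h1 : ∫⁻ x, (∑ k ∈ Finset.Icc 1 n, F (T^[k] x))^2 ∂μ
        = ∑ j ∈ Finset.Icc 1 n, ∑ k ∈ Finset.Icc 1 n, ∫⁻ x, F (T^[j] x) * F (T^[k] x) ∂μ := by
      rw [lintegral_congr hsq, lintegral_finset_sum]
      · exact Finset.sum_congr rfl fun j _ => lintegral_finset_sum _ fun k _ => (hmeas j).mul (hmeas k)
      · exact fun j _ => Finset.measurable_sum _ fun k _ => (hmeas j).mul (hmeas k)
    -- identification of cross terms
    have hterm : ∀ j k : ℕ, j ≤ k → ∫⁻ x, F (T^[j] x) * F (T^[k] x) ∂μ = Tm (k - j) := by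
      intro j k hjk
      have h2 : ∀ x, F (T^[j] x) * F (T^[k] x)
          = (fun y => F y * F (T^[k-j] y)) (T^[j] x) := by
        intro x
        simp only
        congr 2
        rw [← Function.iterate_add_apply, Nat.sub_add_cancel hjk]
      rw [lintegral_congr h2,
        (hT.iterate j).lintegral_comp (f := fun y => F y * F (T^[k - j] y))
          (hFm.mul (hFm.comp (hT.iterate (k-j)).measurable))]
      rw [hTmdef]
      simp only
      rw [(hiter (k-j)).2.2 F hFm]
    have hsymm : ∀ j k : ℕ, ∫⁻ x, F (T^[j] x) * F (T^[k] x) ∂μ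
        = ∫⁻ x, F (T^[k] x) * F (T^[j] x) ∂μ :=
      fun j k => lintegral_congr fun x => mul_comm _ _
    rw [h1]
    have hle : ∀ j ∈ Finset.Icc 1 n, ∀ k ∈ Finset.Icc 1 n,
        ∫⁻ x, F (T^[j] x) * F (T^[k] x) ∂μ
          ≤ (if j ≤ k then Tm (k - j) else 0) + (if k ≤ j then Tm (j - k) else 0) := by
      intro j _ k _
      rcases le_total j k with h | h
      · rw [hterm j k h]; simp [h]
      · rw [hsymm, hterm k j h]; simp [h]
    calc ∑ j ∈ Finset.Icc 1 n, ∑ k ∈ Finset.Icc 1 n, ∫⁻ x, F (T^[j] x) * F (T^[k] x) ∂μ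
        ≤ ∑ j ∈ Finset.Icc 1 n, ∑ k ∈ Finset.Icc 1 n,
            ((if j ≤ k then Tm (k - j) else 0) + (if k ≤ j then Tm (j - k) else 0)) :=
          Finset.sum_le_sum fun j hj => Finset.sum_le_sum fun k hk => hle j hj k hk
      _ = 2 * ∑ j ∈ Finset.Icc 1 n, ∑ k ∈ Finset.Icc 1 n, (if j ≤ k then Tm (k - j) else 0) := by
          rw [Finset.sum_congr rfl fun j _ => Finset.sum_add_distrib]
          rw [Finset.sum_add_distrib, two_mul]
          congr 1
          rw [Finset.sum_comm]
      _ ≤ 2 * ∑ j ∈ Finset.Icc 1 n, ∑ m ∈ Finset.range (n+1), Tm m := by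
          gcongr with j hj
          simp only [Finset.mem_Icc] at hj
          exact reindex_bound Tm n j hj.1 hj.2
      _ = 2 * n * ∑ m ∈ Finset.range (n+1), Tm m := by
          rw [Finset.sum_const, Nat.card_Icc, Nat.add_sub_cancel, nsmul_eq_mul, mul_assoc]
  -- splitting the range sum
  have hsplit : ∀ n : ℕ, ∑ m ∈ Finset.range (n+1), Tm m = Tm 0 + ∑ m ∈ Finset.Icc 1 n, Tm m := by
    intro n
    rw [Finset.sum_range_succ', add_comm]
    congr 1
    refine Finset.sum_nbij' (fun k => k + 1) (fun m => m - 1) ?_ ?_ ?_ ?_ ?_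
    · intro k hk; simp only [Finset.mem_range] at hk; simp only [Finset.mem_Icc]; omega
    · intro m hm; simp only [Finset.mem_Icc] at hm; simp only [Finset.mem_range]; omega
    · intro k _; show k + 1 - 1 = k; omega
    · intro m hm; simp only [Finset.mem_Icc] at hm; show m - 1 + 1 = m; omega
    · intro k _; rfl
  -- the Icc sum as a single integral
  have hSn : ∀ n : ℕ, ∑ m ∈ Finset.Icc 1 n, Tm m
      = ∫⁻ x, (∑ m ∈ Finset.Icc 1 n, ENNReal.ofReal ((dualOp T μ)^[m] g x)) * F x ∂μ := by
    intro n
    rw [← lintegral_finset_sum (f := fun m x => ENNReal.ofReal ((dualOp T μ)^[m] g x) * F x) _ (fun m _ => ((hiter m).1.ennreal_ofReal.mul hFm))]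
    apply lintegral_congr fun x => ?_
    rw [Finset.sum_mul]
  -- uniform control
  obtain ⟨N₀, hN₀⟩ := Filter.eventually_atTop.1 (Metric.tendstoUniformlyOn_iff.1 hunif 1 one_pos)
  set N : ℕ := max N₀ 1 with hNdef
  have hN1 : 1 ≤ N := le_max_right _ _
  have hNb : ∀ n, N ≤ n → ∀ x ∈ B,
      ∑ m ∈ Finset.Icc 1 n, (dualOp T μ)^[m] g x ≤ (|L| + 1) * a n := by
    intro n hn x hx
    have h1 := hN₀ n (le_trans (le_max_left _ _) hn) x hx
    rw [Real.dist_eq] at h1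
    have han : 0 < a n := ha n (le_trans hN1 hn)
    have h2 : (a n)⁻¹ * ∑ m ∈ Finset.Icc 1 n, (dualOp T μ)^[m] g x < L + 1 := by
      cases abs_lt.1 h1 with
      | intro h3 h4 => linarith
    have h5 : L + 1 ≤ |L| + 1 := by
      have := le_abs_self L; linarith
    have h6 := mul_le_mul_of_nonneg_left (le_trans h2.le h5) han.le
    have h7 : a n * ((a n)⁻¹ * ∑ m ∈ Finset.Icc 1 n, (dualOp T μ)^[m] g x)
        = ∑ m ∈ Finset.Icc 1 n, (dualOp T μ)^[m] g x := by
      field_simp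
    rw [h7] at h6
    linarith [h6]
  -- a.e. facts
  have hallnn : ∀ᵐ x ∂μ, ∀ m : ℕ, 0 ≤ (dualOp T μ)^[m] g x :=
    ae_all_iff.2 fun m => (hiter m).2.1
  have hdiff : μ (A \ B) = 0 := by
    rw [measure_diff hBA hBm.nullMeasurableSet (hBfull ▸ hAfin), hBfull, tsub_self]
  have haeB : ∀ᵐ x ∂μ, x ∉ A \ B := measure_eq_zero_iff_ae_notMem.mp hdiff
  set CL : ℝ≥0∞ := ENNReal.ofReal (|L| + 1) with hCL
  -- main bound for large n
  have hbig : ∀ n, N ≤ n → ∑ m ∈ Finset.Icc 1 n, Tm m ≤ CL * ENNReal.ofReal (a n) * J := by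
    intro n hn
    rw [hSn n]
    have step1 : ∫⁻ x, (∑ m ∈ Finset.Icc 1 n, ENNReal.ofReal ((dualOp T μ)^[m] g x)) * F x ∂μ
        ≤ ∫⁻ x, ENNReal.ofReal ((|L| + 1) * a n) * F x ∂μ := by
      apply lintegral_mono_ae
      filter_upwards [hallnn, haeB] with x h1 h2
      by_cases hx : x ∈ A
      · have hxB : x ∈ B := by
          by_contra hxb
          exact h2 ⟨hx, hxb⟩
        gcongr
        rw [← ENNReal.ofReal_sum_of_nonneg (fun m _ => h1 m)]
        exact ENNReal.ofReal_le_ofReal (hNb n hn x hxB)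
      · have : F x = 0 := by simp [hF, hsupp x hx]
        rw [this, mul_zero, mul_zero]
    rw [lintegral_const_mul _ hFm] at step1
    calc ∫⁻ x, (∑ m ∈ Finset.Icc 1 n, ENNReal.ofReal ((dualOp T μ)^[m] g x)) * F x ∂μ
        ≤ ENNReal.ofReal ((|L| + 1) * a n) * J := step1
      _ = CL * ENNReal.ofReal (a n) * J := by
          rw [hCL, ← ENNReal.ofReal_mul (by positivity)]
  -- assemble
  refine ⟨2*Q + 2*CL*J + 4*N*Q, ?_, ?_⟩
  · apply ENNReal.add_ne_top.2
    refine ⟨ENNReal.add_ne_top.2 ⟨?_, ?_⟩, ?_⟩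
    · exact ENNReal.mul_ne_top (by simp) hQ
    · exact ENNReal.mul_ne_top (ENNReal.mul_ne_top (by simp) ENNReal.ofReal_ne_top) hJ
    · exact ENNReal.mul_ne_top (ENNReal.mul_ne_top (by simp) (by simp)) hQ
  · intro n hn
    set c : ℝ≥0∞ := 2*Q + 2*CL*J + 4*N*Q with hcdef
    have hc1 : 2*Q ≤ c := le_trans le_self_add le_self_add
    have hc2 : 2*CL*J ≤ c := le_trans le_add_self le_self_add
    have hc3 : 4*(N:ℝ≥0∞)*Q ≤ c := le_add_self
    refine le_trans (hexp n hn) ?_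
    rcases le_or_gt N n with hNn | hNn
    · -- large n
      have h6 : ∑ m ∈ Finset.range (n+1), Tm m ≤ Q + CL * ENNReal.ofReal (a n) * J := by
        rw [hsplit n, hTm0]
        exact add_le_add_right (hbig n hNn) Q
      calc 2 * (n:ℝ≥0∞) * ∑ m ∈ Finset.range (n+1), Tm m
          ≤ 2 * (n:ℝ≥0∞) * (Q + CL * ENNReal.ofReal (a n) * J) := by gcongr
        _ = 2*Q*(n:ℝ≥0∞) + (2*CL*J)*(n:ℝ≥0∞)*ENNReal.ofReal (a n) := by ring
        _ ≤ c*(n:ℝ≥0∞) + c*(n:ℝ≥0∞)*ENNReal.ofReal (a n) := by gcongr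
        _ = c * n * (1 + ENNReal.ofReal (a n)) := by ring
    · -- small n
      have h7 : ∑ m ∈ Finset.range (n+1), Tm m ≤ (n+1) * Q := by
        calc ∑ m ∈ Finset.range (n+1), Tm m ≤ ∑ m ∈ Finset.range (n+1), Q :=
            Finset.sum_le_sum fun m _ => hTmle m
          _ = (n+1) * Q := by rw [Finset.sum_const, Finset.card_range, nsmul_eq_mul]; push_cast; ring
      calc 2 * (n:ℝ≥0∞) * ∑ m ∈ Finset.range (n+1), Tm m
          ≤ 2 * (n:ℝ≥0∞) * ((n+1) * Q) := by gcongr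
        _ ≤ 2 * (n:ℝ≥0∞) * ((2*N) * Q) := by
            gcongr
            have : (n:ℝ≥0∞) + 1 ≤ (N:ℝ≥0∞) + (N:ℝ≥0∞) := by
              have h8 : (n:ℝ≥0∞) ≤ (N:ℝ≥0∞) := by exact_mod_cast Nat.cast_le.2 hNn.le
              have h9 : (1:ℝ≥0∞) ≤ (N:ℝ≥0∞) := by exact_mod_cast Nat.one_le_cast.2 hN1
              exact add_le_add h8 h9
            calc (n:ℝ≥0∞) + 1 ≤ (N:ℝ≥0∞) + N := this
              _ = 2*N := by ring
        _ = (4*(N:ℝ≥0∞)*Q) * (n:ℝ≥0∞) := by ring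
        _ ≤ c * (n:ℝ≥0∞) := by gcongr
        _ ≤ c * n * (1 + ENNReal.ofReal (a n)) := by
            rw [mul_assoc]
            gcongr
            calc (n:ℝ≥0∞) = (n:ℝ≥0∞) * 1 := (mul_one _).symm
              _ ≤ (n:ℝ≥0∞) * (1 + ENNReal.ofReal (a n)) := by gcongr; exact le_self_add

end sumbound


/-- Uniform second-moment bound: if `A` is a Darling–Kac set whose normalizing
sequence is regularly varying with exponent `β ∈ (0,1)`, `f ∈ L²(μ)` vanishes
outside `A`, and `A` is a uniform set for `|f|`, then
`sup_{n ≥ 1} (a_n² μ(φ ≤ n))⁻¹ ∫ S_n(f)² dμ < ∞`. -/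
theorem ergodic_sums_second_moment_bound
    {E : Type*} [MeasurableSpace E] (μ : Measure E) [SigmaFinite μ]
    (hInf : μ Set.univ = ⊤)
    (T : E → E) (hT : MeasurePreserving T μ μ) (hcons : Conservative T μ)
    (herg : Ergodic T μ)
    (a : ℕ → ℝ) (A : Set E) (hDK : DarlingKacSet T μ a A)
    (β : ℝ) (hβ0 : 0 < β) (hβ1 : β < 1) (hreg : RegularlyVarying a β)
    (f : E → ℝ) (hfmeas : Measurable f) (hf2 : MemLp f 2 μ)
    (hsupp : ∀ x ∉ A, f x = 0)
    (huni : UniformSet T μ a A (fun x => |f x|)) :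
    ∃ C : ℝ≥0∞, C ≠ ⊤ ∧ ∀ n : ℕ, 1 ≤ n →
      ∫⁻ x, ENNReal.ofReal (ergSum T f n x ^ 2) ∂μ
        ≤ C * ENNReal.ofReal (a n ^ 2) * μ {x | firstEntrance T A x ≤ (n : ℕ∞)} := by

  classical
  obtain ⟨hA, hApos, hAfin, hatop, BA, hBAsub, hBAm, hBAfull, hunifA⟩ := hDK
  obtain ⟨Bf, hBfsub, hBfm, hBffull, hunifF⟩ := huni
  have ha := hreg.1
  -- second moment bound for |f|
  have hQf : ∫⁻ x, (ENNReal.ofReal |f x|)^2 ∂μ ≠ ⊤ := by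
    have h := hf2.2
    rw [eLpNorm_eq_lintegral_rpow_enorm_toReal (by norm_num) (by norm_num)] at h
    simp only [ENNReal.toReal_ofNat] at h
    intro hc
    have heq : ∫⁻ x, ‖f x‖ₑ ^ (2:ℝ) ∂μ = ⊤ := by
      rw [← hc]
      apply lintegral_congr fun x => ?_
      rw [← Real.norm_eq_abs, ofReal_norm, ← ENNReal.rpow_natCast]
      norm_num
    rw [heq] at h
    simp [ENNReal.top_rpow_of_pos] at h
  obtain ⟨cf, hcf, hGf⟩ := sum_sq_bound hT hA hAfin.ne ha hfmeas.abs
    (fun x => abs_nonneg _) (fun x hx => by rw [hsupp x hx]; simp) hQf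
    hBfsub hBfm hBffull hunifF
  -- second moment bound for the indicator of A
  have hIm : Measurable (A.indicator (1 : E → ℝ)) := measurable_one.indicator hA
  have hI0 : ∀ x, 0 ≤ A.indicator (1 : E → ℝ) x :=
    Set.indicator_nonneg (fun _ _ => zero_le_one)
  have hQIeq : ∫⁻ x, (ENNReal.ofReal (A.indicator (1 : E → ℝ) x))^2 ∂μ = μ A := by
    rw [← lintegral_indicator_one hA]
    apply lintegral_congr fun x => ?_
    by_cases hx : x ∈ A <;>
      simp [Set.indicator_of_mem, Set.indicator_of_notMem, hx]
  obtain ⟨cA, hcA, hGA⟩ := sum_sq_bound hT hA hAfin.ne ha hIm hI0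
    (fun x hx => Set.indicator_of_notMem hx _) (hQIeq ▸ hAfin.ne)
    hBAsub hBAm hBAfull hunifA
  -- notation
  set IA : E → ℝ≥0∞ := fun x => ENNReal.ofReal (A.indicator (1 : E → ℝ) x) with hIA
  have hIAm : Measurable IA := hIm.ennreal_ofReal
  set U : ℕ → Set E := fun n => ⋃ k ∈ Finset.Icc 1 n, T^[k] ⁻¹' A with hU
  have hUm : ∀ n, MeasurableSet (U n) :=
    fun n => Finset.measurableSet_biUnion _ fun k _ => (hT.iterate k).measurable hA
  have hUS : ∀ n : ℕ, U n ⊆ {x | firstEntrance T A x ≤ (n : ℕ∞)} := by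
    intro n x hx
    simp only [hU, Set.mem_iUnion, Set.mem_preimage] at hx
    obtain ⟨k, hk, hxk⟩ := hx
    simp only [Finset.mem_Icc] at hk
    have h1 : firstEntrance T A x ≤ (k : ℕ∞) :=
      sInf_le ⟨k, rfl, hk.1, hxk⟩
    exact le_trans h1 (by exact_mod_cast hk.2)
  have hAU : ∀ n : ℕ, 1 ≤ n → μ A ≤ μ (U n) := by
    intro n hn
    have h1 : T^[1] ⁻¹' A ⊆ U n := fun x hx =>
      Set.mem_biUnion (Finset.mem_Icc.2 ⟨le_refl 1, hn⟩) hx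
    refine le_trans (le_of_eq ?_) (measure_mono h1)
    exact ((hT.iterate 1).measure_preimage hA.nullMeasurableSet).symm
  -- the counting function
  have hhm : ∀ n : ℕ, Measurable fun x => ∑ k ∈ Finset.Icc 1 n, IA (T^[k] x) :=
    fun n => Finset.measurable_sum _ fun k _ => hIAm.comp (hT.iterate k).measurable
  have hIAint : ∫⁻ x, IA x ∂μ = μ A := by
    rw [← lintegral_indicator_one hA]
    apply lintegral_congr fun x => ?_
    by_cases hx : x ∈ A <;>
      simp [hIA, Set.indicator_of_mem, Set.indicator_of_notMem, hx]
  have hcount : ∀ n : ℕ, ∫⁻ x, (∑ k ∈ Finset.Icc 1 n, IA (T^[k] x)) ∂μ = n * μ A := by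
    intro n
    rw [lintegral_finset_sum (f := fun k x => IA (T^[k] x)) _
      (fun k _ => hIAm.comp (hT.iterate k).measurable)]
    have h1 : ∀ k : ℕ, ∫⁻ x, IA (T^[k] x) ∂μ = μ A := by
      intro k
      rw [(hT.iterate k).lintegral_comp hIAm, hIAint]
    rw [Finset.sum_congr rfl fun k _ => h1 k, Finset.sum_const, Nat.card_Icc,
      Nat.add_sub_cancel, nsmul_eq_mul]
  -- Cauchy-Schwarz lower bound for μ (U n)
  have hlow : ∀ n : ℕ, 1 ≤ n →
      ((n : ℝ≥0∞) * μ A) * ((n : ℝ≥0∞) * μ A)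
        ≤ (∫⁻ x, (∑ k ∈ Finset.Icc 1 n, IA (T^[k] x))^2 ∂μ) * μ (U n) := by
    intro n hn
    have hindm : Measurable fun x => ((U n).indicator 1 x : ℝ≥0∞) :=
      measurable_one.indicator (hUm n)
    have e1 : ∫⁻ x, (∑ k ∈ Finset.Icc 1 n, IA (T^[k] x)) ∂μ
        = ∫⁻ x, (∑ k ∈ Finset.Icc 1 n, IA (T^[k] x)) * (U n).indicator 1 x ∂μ := by
      apply lintegral_congr fun x => ?_
      by_cases hx : x ∈ U n
      · rw [Set.indicator_of_mem hx, Pi.one_apply, mul_one]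
      · rw [Set.indicator_of_notMem hx, mul_zero]
        apply Finset.sum_eq_zero fun k hk => ?_
        have hxk : T^[k] x ∉ A := by
          intro hc
          exact hx (Set.mem_biUnion hk hc)
        simp [hIA, Set.indicator_of_notMem hxk]
    have e2 : ∫⁻ x, ((U n).indicator 1 x : ℝ≥0∞)^2 ∂μ = μ (U n) := by
      rw [← lintegral_indicator_one (hUm n)]
      apply lintegral_congr fun x => ?_
      by_cases hx : x ∈ U n <;>
        simp [Set.indicator_of_mem, Set.indicator_of_notMem, hx]
    have e3 := lint_cauchy (μ := μ) (hhm n) hindm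
    rw [← e1, hcount n, e2] at e3
    calc ((n : ℝ≥0∞) * μ A) * ((n : ℝ≥0∞) * μ A)
        ≤ ((∫⁻ x, (∑ k ∈ Finset.Icc 1 n, IA (T^[k] x))^2 ∂μ) ^ ((1:ℝ)/2) * μ (U n) ^ ((1:ℝ)/2))
          * ((∫⁻ x, (∑ k ∈ Finset.Icc 1 n, IA (T^[k] x))^2 ∂μ) ^ ((1:ℝ)/2) * μ (U n) ^ ((1:ℝ)/2)) :=
          mul_le_mul' e3 e3
      _ = (∫⁻ x, (∑ k ∈ Finset.Icc 1 n, IA (T^[k] x))^2 ∂μ) * μ (U n) := by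
          rw [mul_mul_mul_comm, sqrt_mul_self', sqrt_mul_self']
  -- key inequality
  have hkey : ∀ n : ℕ, 1 ≤ n →
      (n : ℝ≥0∞) * (μ A)^2 ≤ cA * (1 + ENNReal.ofReal (a n)) * μ (U n) := by
    intro n hn
    have h1 := le_trans (hlow n hn) (mul_le_mul_left (hGA n hn) (μ (U n)))
    have h2 : ((n : ℝ≥0∞) * μ A) * ((n : ℝ≥0∞) * μ A)
        = (n : ℝ≥0∞) * ((n : ℝ≥0∞) * (μ A)^2) := by ring
    have h3 : cA * (n : ℝ≥0∞) * (1 + ENNReal.ofReal (a n)) * μ (U n)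
        = (n : ℝ≥0∞) * (cA * (1 + ENNReal.ofReal (a n)) * μ (U n)) := by ring
    rw [h2, h3] at h1
    exact (ENNReal.mul_le_mul_iff_right (by exact_mod_cast (Nat.pos_of_ne_zero (by omega)).ne')
      (ENNReal.natCast_ne_top n)).1 h1
  -- pointwise comparison with |f|
  have hpt : ∀ (n : ℕ) (x : E), ENNReal.ofReal (ergSum T f n x ^ 2)
      ≤ (∑ k ∈ Finset.Icc 1 n, ENNReal.ofReal |f (T^[k] x)|)^2 := by
    intro n x
    have h1 : ergSum T f n x ^ 2 ≤ (∑ k ∈ Finset.Icc 1 n, |f (T^[k] x)|) ^ 2 := by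
      rw [ergSum, ← sq_abs]
      exact pow_le_pow_left₀ (abs_nonneg _) (Finset.abs_sum_le_sum_abs _ _) 2
    refine le_trans (ENNReal.ofReal_le_ofReal h1) (le_of_eq ?_)
    rw [ENNReal.ofReal_pow (Finset.sum_nonneg fun k _ => abs_nonneg _),
      ENNReal.ofReal_sum_of_nonneg (fun k _ => abs_nonneg _)]
  -- threshold where a n ≥ 1
  obtain ⟨N₂, hN₂⟩ := Filter.eventually_atTop.1 (hatop.eventually_ge_atTop 1)
  set Nb : ℕ := max N₂ 1 with hNb
  -- constants
  set W : ℝ≥0∞ := (μ A)^2 with hW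
  have hW0 : W ≠ 0 := pow_ne_zero 2 hApos.ne'
  have hWt : W ≠ ⊤ := by
    rw [hW]; exact ENNReal.pow_ne_top hAfin.ne
  set C₁ : ℝ≥0∞ := 4 * cf * cA * W⁻¹ with hC₁
  have hC₁t : C₁ ≠ ⊤ :=
    ENNReal.mul_ne_top (ENNReal.mul_ne_top (ENNReal.mul_ne_top (by simp) hcf) hcA)
      (ENNReal.inv_ne_top.2 hW0)
  set D : ℕ → ℝ≥0∞ := fun n =>
    (cf * n * (1 + ENNReal.ofReal (a n))) * (ENNReal.ofReal (a n ^ 2))⁻¹ * (μ A)⁻¹ with hD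
  have hDt : ∀ n ∈ Finset.Icc 1 Nb, D n < ⊤ := by
    intro n hn
    simp only [Finset.mem_Icc] at hn
    have han : 0 < a n := ha n hn.1
    rw [hD]
    simp only
    rw [lt_top_iff_ne_top]
    refine ENNReal.mul_ne_top (ENNReal.mul_ne_top ?_ ?_) ?_
    · exact ENNReal.mul_ne_top (ENNReal.mul_ne_top hcf (ENNReal.natCast_ne_top n))
        (by simp)
    · exact ENNReal.inv_ne_top.2 (ENNReal.ofReal_pos.2 (by positivity)).ne'
    · exact ENNReal.inv_ne_top.2 hApos.ne'
  refine ⟨C₁ ⊔ (Finset.Icc 1 Nb).sup D, ?_, ?_⟩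
  · rw [← lt_top_iff_ne_top, sup_lt_iff]
    exact ⟨hC₁t.lt_top, (Finset.sup_lt_iff (by simp)).2 hDt⟩
  · intro n hn
    have step1 : ∫⁻ x, ENNReal.ofReal (ergSum T f n x ^ 2) ∂μ
        ≤ ∫⁻ x, (∑ k ∈ Finset.Icc 1 n, ENNReal.ofReal |f (T^[k] x)|)^2 ∂μ :=
      lintegral_mono fun x => hpt n x
    have step2 := hGf n hn
    have hUSn : μ (U n) ≤ μ {x | firstEntrance T A x ≤ (n : ℕ∞)} :=
      measure_mono (hUS n)
    rcases le_or_gt Nb n with hbig | hsmall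
    · -- large n
      have han1 : (1 : ℝ) ≤ a n := hN₂ n (le_trans (le_max_left _ _) hbig)
      have han0 : (0:ℝ) ≤ a n := le_trans zero_le_one han1
      have h1a : 1 + ENNReal.ofReal (a n) ≤ 2 * ENNReal.ofReal (a n) := by
        rw [two_mul]
        exact add_le_add_left (ENNReal.one_le_ofReal.2 han1) _
      have hdiv : (n : ℝ≥0∞) ≤ (cA * (1 + ENNReal.ofReal (a n)) * μ (U n)) / W :=
        (ENNReal.le_div_iff_mul_le (Or.inl hW0) (Or.inl hWt)).2 (hkey n hn)
      calc ∫⁻ x, ENNReal.ofReal (ergSum T f n x ^ 2) ∂μ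
          ≤ cf * (n : ℝ≥0∞) * (1 + ENNReal.ofReal (a n)) := le_trans step1 step2
        _ ≤ cf * ((cA * (1 + ENNReal.ofReal (a n)) * μ (U n)) / W)
              * (1 + ENNReal.ofReal (a n)) := by gcongr
        _ = (cf * cA * W⁻¹) * ((1 + ENNReal.ofReal (a n)) * (1 + ENNReal.ofReal (a n)))
              * μ (U n) := by
            rw [div_eq_mul_inv]; ring
        _ ≤ (cf * cA * W⁻¹) * ((2 * ENNReal.ofReal (a n)) * (2 * ENNReal.ofReal (a n)))
              * μ (U n) := by gcongr
        _ = C₁ * ENNReal.ofReal (a n ^ 2) * μ (U n) := by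
            rw [hC₁, ENNReal.ofReal_pow han0, sq]; ring
        _ ≤ (C₁ ⊔ (Finset.Icc 1 Nb).sup D) * ENNReal.ofReal (a n ^ 2)
              * μ {x | firstEntrance T A x ≤ (n : ℕ∞)} := by
            gcongr
            exact le_sup_left
    · -- small n
      have hmem : n ∈ Finset.Icc 1 Nb := Finset.mem_Icc.2 ⟨hn, hsmall.le⟩
      have han : 0 < a n := ha n hn
      have hXn0 : ENNReal.ofReal (a n ^ 2) ≠ 0 := (ENNReal.ofReal_pos.2 (by positivity)).ne'
      have hXnt : ENNReal.ofReal (a n ^ 2) ≠ ⊤ := ENNReal.ofReal_ne_top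
      have heqD : D n * ENNReal.ofReal (a n ^ 2) * μ A
          = cf * (n : ℝ≥0∞) * (1 + ENNReal.ofReal (a n)) := by
        rw [hD]
        simp only
        calc (cf * n * (1 + ENNReal.ofReal (a n))) * (ENNReal.ofReal (a n ^ 2))⁻¹ * (μ A)⁻¹
              * ENNReal.ofReal (a n ^ 2) * μ A
            = (cf * n * (1 + ENNReal.ofReal (a n)))
                * ((ENNReal.ofReal (a n ^ 2))⁻¹ * ENNReal.ofReal (a n ^ 2))
                * ((μ A)⁻¹ * μ A) := by ring
          _ = cf * (n : ℝ≥0∞) * (1 + ENNReal.ofReal (a n)) := by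
              rw [ENNReal.inv_mul_cancel hXn0 hXnt, ENNReal.inv_mul_cancel hApos.ne' hAfin.ne,
                mul_one, mul_one]
      calc ∫⁻ x, ENNReal.ofReal (ergSum T f n x ^ 2) ∂μ
          ≤ cf * (n : ℝ≥0∞) * (1 + ENNReal.ofReal (a n)) := le_trans step1 step2
        _ = D n * ENNReal.ofReal (a n ^ 2) * μ A := heqD.symm
        _ ≤ D n * ENNReal.ofReal (a n ^ 2) * μ {x | firstEntrance T A x ≤ (n : ℕ∞)} :=
            mul_le_mul_right (le_trans (hAU n hn) hUSn) _
        _ ≤ (C₁ ⊔ (Finset.Icc 1 Nb).sup D) * ENNReal.ofReal (a n ^ 2)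
              * μ {x | firstEntrance T A x ≤ (n : ℕ∞)} := by
            gcongr
            exact le_sup_of_le_right (Finset.le_sup hmem)
end

section
/- For every β∈(0,1) and every y>0, ∫_0^1 ( t/(1−t) )^β (t+y)^{−1} dt = (π / sin(βπ)) ( 1 − ( y/(1+y) )^β ). -/
open MeasureTheory Set

namespace IntegralRpowAux

/-- Derivative of `t ↦ t/(1-t)`. -/
lemma hasDerivAt_phi {t : ℝ} (ht : t ∈ Set.Ioo (0:ℝ) 1) :
    HasDerivAt (fun t : ℝ => t / (1 - t)) (((1 - t) ^ 2)⁻¹) t := by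
  have h1 : 1 - t ≠ 0 := by have := ht.2; intro h; nlinarith
  have := (hasDerivAt_id t).div ((hasDerivAt_const t (1:ℝ)).sub (hasDerivAt_id t)) h1
  refine HasDerivAt.congr_deriv this ?_
  simp only [Pi.sub_apply, id]
  rw [div_eq_mul_inv]
  ring

lemma injOn_phi : Set.InjOn (fun t : ℝ => t / (1 - t)) (Set.Ioo 0 1) := by
  intro a ha b hb h
  have ha1 : 1 - a ≠ 0 := by have := ha.2; intro hh; nlinarith
  have hb1 : 1 - b ≠ 0 := by have := hb.2; intro hh; nlinarith
  field_simp at h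
  nlinarith [h]

lemma image_phi : (fun t : ℝ => t / (1 - t)) '' (Set.Ioo 0 1) = Set.Ioi 0 := by
  ext s
  constructor
  · rintro ⟨t, ht, rfl⟩
    exact div_pos ht.1 (by linarith [ht.2])
  · intro hs
    have hs' : (0:ℝ) < s := hs
    have h1s : (0:ℝ) < 1 + s := by linarith
    refine ⟨s / (1 + s), ⟨div_pos hs' h1s, by rw [div_lt_one h1s]; linarith⟩, ?_⟩
    show s / (1 + s) / (1 - s / (1 + s)) = s
    have h : 1 - s / (1 + s) = 1 / (1 + s) := by field_simp; ring
    rw [h]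
    field_simp

/-- Change of variables `s = t/(1-t)` sending `(0,1)` to `(0,∞)`. -/
lemma integral_subst (g : ℝ → ℝ) :
    ∫ s in Set.Ioi (0:ℝ), g s
      = ∫ t in Set.Ioo (0:ℝ) 1, ((1 - t) ^ 2)⁻¹ * g (t / (1 - t)) := by
  rw [← image_phi,
    integral_image_eq_integral_abs_deriv_smul measurableSet_Ioo
      (fun t ht => (hasDerivAt_phi ht).hasDerivWithinAt) injOn_phi g]
  refine setIntegral_congr_fun measurableSet_Ioo fun t ht => ?_
  have h1 : (0:ℝ) < 1 - t := by linarith [ht.2]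
  rw [smul_eq_mul, abs_of_pos (by positivity)]

/-- Integrability of `s ↦ s^(β-1)/(c+s)` on `(0,∞)`. -/
lemma integrableOn_aux {β c : ℝ} (hβ0 : 0 < β) (hβ1 : β < 1) (hc : 0 < c) :
    IntegrableOn (fun s : ℝ => s ^ (β - 1) / (c + s)) (Set.Ioi 0) := by
  have hcont : ContinuousOn (fun s : ℝ => s ^ (β - 1) / (c + s)) (Set.Ioi 0) := by
    apply ContinuousOn.div
    · exact continuousOn_id.rpow_const fun x hx => Or.inl (ne_of_gt hx)
    · fun_prop
    · intro x hx
      have : (0:ℝ) < x := hx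
      positivity
  have i1 : IntegrableOn (fun s : ℝ => s ^ (β - 1) / (c + s)) (Set.Ioc 0 1) := by
    have hb : IntegrableOn (fun s : ℝ => s ^ (β - 1) / c) (Set.Ioc 0 1) := by
      have := (intervalIntegral.intervalIntegrable_rpow' (r := β - 1) (by linarith)
        (a := 0) (b := 1))
      rw [intervalIntegrable_iff_integrableOn_Ioc_of_le (by norm_num)] at this
      simpa [div_eq_mul_inv, IntegrableOn] using this.mul_const c⁻¹
    refine hb.mono' ((hcont.mono Ioc_subset_Ioi_self).aestronglyMeasurable measurableSet_Ioc) ?_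
    filter_upwards [ae_restrict_mem measurableSet_Ioc] with s hs
    have hs0 : (0:ℝ) < s := hs.1
    rw [Real.norm_eq_abs, abs_of_nonneg (by positivity)]
    gcongr
    linarith
  have i2 : IntegrableOn (fun s : ℝ => s ^ (β - 1) / (c + s)) (Set.Ioi 1) := by
    refine (integrableOn_Ioi_rpow_of_lt (a := β - 2) (by linarith) one_pos).mono'
      ((hcont.mono (Set.Ioi_subset_Ioi zero_le_one)).aestronglyMeasurable measurableSet_Ioi) ?_
    filter_upwards [ae_restrict_mem measurableSet_Ioi] with s hs
    have hs0 : (0:ℝ) < s := lt_trans one_pos hs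
    rw [Real.norm_eq_abs, abs_of_nonneg (by positivity)]
    have : s ^ (β - 2) = s ^ (β - 1) / s := by
      rw [show β - 2 = (β - 1) - 1 by ring, Real.rpow_sub hs0, Real.rpow_one]
    rw [this]
    gcongr
    linarith
  have := i1.union i2
  rwa [Set.Ioc_union_Ioi_eq_Ioi (by norm_num : (0:ℝ) ≤ 1)] at this

/-- The real Beta integral `∫_0^1 t^(β-1) (1-t)^(-β) dt = π / sin (π β)`. -/
lemma beta_value {β : ℝ} (hβ0 : 0 < β) (hβ1 : β < 1) :
    ∫ t in Set.Ioo (0:ℝ) 1, t ^ (β - 1) * (1 - t) ^ (-β) = Real.pi / Real.sin (Real.pi * β) := by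
  have hre : 0 < Complex.re (β : ℂ) := by simpa using hβ0
  have hre' : 0 < Complex.re (1 - (β : ℂ)) := by simpa using (by linarith : 0 < 1 - β)
  have h1 := Complex.Gamma_mul_Gamma_eq_betaIntegral hre hre'
  rw [add_sub_cancel, Complex.Gamma_one, one_mul] at h1
  have h2 := Complex.Gamma_mul_Gamma_one_sub (β : ℂ)
  rw [h2] at h1
  -- `h1 : ↑π / sin (↑π * ↑β) = betaIntegral β (1 - β)`
  have h3 : Complex.betaIntegral (β : ℂ) (1 - β)
      = ((∫ t in Set.Ioo (0:ℝ) 1, t ^ (β - 1) * (1 - t) ^ (-β) : ℝ) : ℂ) := by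
    rw [Complex.betaIntegral, intervalIntegral.integral_of_le (by norm_num : (0:ℝ) ≤ 1),
      MeasureTheory.integral_Ioc_eq_integral_Ioo]
    rw [setIntegral_congr_fun (g := fun x : ℝ => ((x ^ (β - 1) * (1 - x) ^ (-β) : ℝ) : ℂ))
      measurableSet_Ioo fun x hx => ?_]
    · have cc : ∀ r : ℝ, (r : ℂ) = @RCLike.ofReal ℂ _ r := fun r => rfl
      simp_rw [cc]
      exact _root_.integral_ofReal
    · have hx0 : (0:ℝ) ≤ x := hx.1.le
      have hx1 : (0:ℝ) ≤ 1 - x := by linarith [hx.2]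
      show (x:ℂ) ^ ((β:ℂ) - 1) * (1 - (x:ℂ)) ^ (1 - (β:ℂ) - 1)
          = ((x ^ (β - 1) * (1 - x) ^ (-β) : ℝ) : ℂ)
      rw [Complex.ofReal_mul, Complex.ofReal_cpow hx0, Complex.ofReal_cpow hx1]
      push_cast
      ring_nf
  rw [h3] at h1
  have := h1.symm
  rw [show ((Real.pi : ℂ) / Complex.sin ((Real.pi : ℂ) * (β : ℂ)))
      = ((Real.pi / Real.sin (Real.pi * β) : ℝ) : ℂ) by push_cast; ring] at this
  exact_mod_cast this

/-- `∫_0^∞ s^(β-1)/(1+s) ds = π / sin (π β)`. -/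
lemma M_one {β : ℝ} (hβ0 : 0 < β) (hβ1 : β < 1) :
    ∫ s in Set.Ioi (0:ℝ), s ^ (β - 1) / (1 + s) = Real.pi / Real.sin (Real.pi * β) := by
  rw [integral_subst (fun s => s ^ (β - 1) / (1 + s)), ← beta_value hβ0 hβ1]
  refine setIntegral_congr_fun measurableSet_Ioo fun t ht => ?_
  obtain ⟨h0, h1⟩ := ht
  have h1t : (0:ℝ) < 1 - t := by linarith
  have hd : (1:ℝ) + t / (1 - t) = (1 - t)⁻¹ := by field_simp; ring
  rw [hd, Real.div_rpow h0.le h1t.le]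
  rw [show ((1 - t) ^ 2)⁻¹ = (1 - t) ^ (-2 : ℝ) by
    rw [← Real.rpow_two, ← Real.rpow_neg h1t.le]]
  rw [show t ^ (β-1) / (1-t) ^ (β-1) / (1-t)⁻¹
      = t ^ (β-1) * ((1-t) ^ (β-1))⁻¹ * (1-t) by
    rw [div_eq_mul_inv, div_eq_mul_inv, inv_inv]]
  rw [← Real.rpow_neg h1t.le]
  rw [show (1 - t) ^ (-2:ℝ) * (t ^ (β-1) * (1-t) ^ (-(β-1)) * (1-t))
      = t ^ (β-1) * ((1-t) ^ (-2:ℝ) * ((1-t) ^ (-(β-1)) * (1-t) ^ (1:ℝ))) by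
    rw [Real.rpow_one]; ring]
  rw [← Real.rpow_add h1t, ← Real.rpow_add h1t, show (-2:ℝ) + (-(β-1) + 1) = -β by ring]

/-- Scaling: `∫_0^∞ s^(β-1)/(c+s) ds = c^(β-1) π / sin (π β)`. -/
lemma M_general {β c : ℝ} (hβ0 : 0 < β) (hβ1 : β < 1) (hc : 0 < c) :
    ∫ s in Set.Ioi (0:ℝ), s ^ (β - 1) / (c + s)
      = c ^ (β - 1) * (Real.pi / Real.sin (Real.pi * β)) := by
  have h := integral_comp_mul_left_Ioi (fun s : ℝ => s ^ (β - 1) / (c + s)) 0 hc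
  simp only [mul_zero, smul_eq_mul] at h
  have h2 : ∫ x in Set.Ioi (0:ℝ), (c * x) ^ (β - 1) / (c + c * x)
      = c ^ (β - 2) * ∫ x in Set.Ioi (0:ℝ), x ^ (β - 1) / (1 + x) := by
    rw [← MeasureTheory.integral_const_mul]
    refine setIntegral_congr_fun measurableSet_Ioi fun x hx => ?_
    have hx0 : (0:ℝ) < x := hx
    rw [Real.mul_rpow hc.le hx0.le, show c + c * x = c * (1 + x) by ring,
      show β - 2 = (β - 1) + (-1 : ℝ) by ring, Real.rpow_add hc, Real.rpow_neg_one]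
    have h1x : (0:ℝ) < 1 + x := by linarith
    field_simp
  rw [h2] at h
  have hcc : c * c ^ (β - 2) = c ^ (β - 1) := by
    rw [mul_comm, ← Real.rpow_add_one hc.ne', show β - 2 + 1 = β - 1 by ring]
  have hI : ∫ s in Set.Ioi (0:ℝ), s ^ (β - 1) / (c + s)
      = c * (c ^ (β - 2) * ∫ x in Set.Ioi (0:ℝ), x ^ (β - 1) / (1 + x)) := by
    rw [h, ← mul_assoc, mul_inv_cancel₀ hc.ne', one_mul]
  rw [hI, M_one hβ0 hβ1, ← mul_assoc, hcc]

end IntegralRpowAux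

open MeasureTheory

/-- For every `β ∈ (0,1)` and `y > 0`,
`∫_0^1 (t/(1-t))^β (t+y)⁻¹ dt = (π / sin(βπ)) (1 - (y/(1+y))^β)`. -/
theorem integral_rpow_div_add_eq (β y : ℝ) (hβ0 : 0 < β) (hβ1 : β < 1) (hy : 0 < y) :
    ∫ t in Set.Ioo (0 : ℝ) 1, (t / (1 - t)) ^ β / (t + y)
      = Real.pi / Real.sin (β * Real.pi) * (1 - (y / (1 + y)) ^ β) := by
  open IntegralRpowAux in
  set a : ℝ := y / (1 + y) with ha_def
  have h1y : (0:ℝ) < 1 + y := by linarith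
  have ha : 0 < a := div_pos hy h1y
  have ha1 : a < 1 := by rw [ha_def, div_lt_one h1y]; linarith
  -- pointwise identity reducing to the substituted integrand
  have key : ∀ t ∈ Set.Ioo (0:ℝ) 1,
      (t / (1 - t)) ^ β / (t + y)
        = ((1 - t) ^ 2)⁻¹ *
          ((t / (1 - t)) ^ (β - 1) / (1 + t / (1 - t))
            - a * ((t / (1 - t)) ^ (β - 1) / (a + t / (1 - t)))) := by
    intro t ht
    obtain ⟨h0, h1⟩ := ht
    have h1t : (0:ℝ) < 1 - t := by linarith
    have hs : (0:ℝ) < t / (1 - t) := div_pos h0 h1t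
    have hpow : (t / (1 - t)) ^ β = (t / (1 - t)) ^ (β - 1) * (t / (1 - t)) := by
      rw [← Real.rpow_add_one hs.ne', show β - 1 + 1 = β by ring]
    have hty : (0:ℝ) < t + y := by linarith
    have hden1 : (1:ℝ) + t / (1 - t) = (1 - t)⁻¹ := by field_simp; ring
    have hden2 : a + t / (1 - t) = (t + y) / ((1 + y) * (1 - t)) := by
      rw [ha_def]; field_simp; ring
    rw [hpow, hden1, hden2, ha_def]
    field_simp
    ring
  rw [setIntegral_congr_fun measurableSet_Ioo key,
    ← integral_subst (fun s => s ^ (β - 1) / (1 + s) - a * (s ^ (β - 1) / (a + s)))]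
  have int1 : IntegrableOn (fun s : ℝ => s ^ (β - 1) / (1 + s)) (Set.Ioi 0) :=
    integrableOn_aux hβ0 hβ1 one_pos
  have int2 : IntegrableOn (fun s : ℝ => s ^ (β - 1) / (a + s)) (Set.Ioi 0) :=
    integrableOn_aux hβ0 hβ1 ha
  rw [MeasureTheory.integral_sub int1 (int2.const_mul a),
    MeasureTheory.integral_const_mul, M_one hβ0 hβ1, M_general hβ0 hβ1 ha]
  have haa : a * (a ^ (β - 1)) = a ^ β := by
    rw [mul_comm, ← Real.rpow_add_one ha.ne', show β - 1 + 1 = β by ring]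
  rw [mul_comm β Real.pi]
  rw [show a * (a ^ (β-1) * (Real.pi / Real.sin (Real.pi * β)))
      = (a * a ^ (β-1)) * (Real.pi / Real.sin (Real.pi * β)) by ring, haa]
  ring
end
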